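/- arXiv:2206.00714 — 3 statements merged into one kernel-verified Lean document; each statement's English description precedes it below -/
import Mathlib

section
/- Let (X,d) be a compact metric space, f_{1,∞} an NDS on X, Z ⊆ X, and ψ ∈ C(X,ℝ). Then the Pesin–Pitskel topological pressure equals the weighted topological pressure: P^B_{f_{1,∞}}(Z,ψ) = P^W_{f_{1,∞}}(Z,ψ). -/
open Filter MeasureTheory Set ENNReal

noncomputable section

variable {X : Type} [MetricSpace X]

/-- The iterate `f_1^n = f_n ∘ ⋯ ∘ f_1` of the NDS `f`, where `f 0` is the first map `f_1`. -/
def nIter (f : ℕ → X → X) : ℕ → X → X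
  | 0 => id
  | n + 1 => f n ∘ nIter f n

/-- The Bowen (dynamical) ball `B_n(x, ε)` for the Bowen metric
`d_n(x,y) = max_{0 ≤ j < n} d(f_1^j x, f_1^j y)`. -/
def bowenBall (f : ℕ → X → X) (n : ℕ) (x : X) (ε : ℝ) : Set X :=
  {y | ∀ j < n, dist (nIter f j x) (nIter f j y) < ε}

/-- The Birkhoff sum `S_{1,n} ψ (x) = ∑_{j=0}^{n-1} ψ(f_1^j x)`. -/
def birkSum (f : ℕ → X → X) (ψ : X → ℝ) (n : ℕ) (x : X) : ℝ :=
  ∑ j ∈ Finset.range n, ψ (nIter f j x)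

/-- `S_{1,n} ψ (x, ε) = sup_{y ∈ B_n(x,ε)} S_{1,n} ψ (y)`. -/
def birkSupBall (f : ℕ → X → X) (ψ : X → ℝ) (n : ℕ) (x : X) (ε : ℝ) : ℝ :=
  sSup (birkSum f ψ n '' bowenBall f n x ε)

/-- `M(n, α, ε, Z, ψ)`: infimum of `∑_i exp(-α n_i + S_{1,n_i}ψ(x_i, ε))` over all finite or
countable covers `Z ⊆ ⋃_i B_{n_i}(x_i, ε)` with `n_i ≥ n`. -/
def Mpre (f : ℕ → X → X) (ψ : X → ℝ) (Z : Set X) (n : ℕ) (α ε : ℝ) : ℝ≥0∞ :=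
  sInf { S : ℝ≥0∞ | ∃ (u : Set ℕ) (c : ℕ → X) (m : ℕ → ℕ),
    (∀ i ∈ u, n ≤ m i) ∧ (Z ⊆ ⋃ i ∈ u, bowenBall f (m i) (c i) ε) ∧
    S = ∑' i : u, ENNReal.ofReal (Real.exp (-α * (m i : ℝ) + birkSupBall f ψ (m i) (c i) ε)) }

/-- `𝓜(n, α, ε, Z, ψ)`: as `Mpre` but with the Birkhoff sums evaluated at the centers. -/
def MpreC (f : ℕ → X → X) (ψ : X → ℝ) (Z : Set X) (n : ℕ) (α ε : ℝ) : ℝ≥0∞ :=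
  sInf { S : ℝ≥0∞ | ∃ (u : Set ℕ) (c : ℕ → X) (m : ℕ → ℕ),
    (∀ i ∈ u, n ≤ m i) ∧ (Z ⊆ ⋃ i ∈ u, bowenBall f (m i) (c i) ε) ∧
    S = ∑' i : u, ENNReal.ofReal (Real.exp (-α * (m i : ℝ) + birkSum f ψ (m i) (c i))) }

/-- `M(α, ε, Z, ψ) = lim_{n→∞} M(n, α, ε, Z, ψ)`; the quantity is nondecreasing in `n`,
so the limit is the supremum. -/
def Mlim (f : ℕ → X → X) (ψ : X → ℝ) (Z : Set X) (α ε : ℝ) : ℝ≥0∞ :=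
  ⨆ n : ℕ, Mpre f ψ Z n α ε

/-- `𝓜(α, ε, Z, ψ) = lim_{n→∞} 𝓜(n, α, ε, Z, ψ)`. -/
def MlimC (f : ℕ → X → X) (ψ : X → ℝ) (Z : Set X) (α ε : ℝ) : ℝ≥0∞ :=
  ⨆ n : ℕ, MpreC f ψ Z n α ε

/-- `P^B(ε, Z, ψ) = inf {α : M(α, ε, Z, ψ) = 0}`, as an extended real. -/
def PBeps (f : ℕ → X → X) (ψ : X → ℝ) (Z : Set X) (ε : ℝ) : EReal :=
  sInf (Real.toEReal '' {α : ℝ | Mlim f ψ Z α ε = 0})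

/-- `𝒫^B(ε, Z, ψ) = inf {α : 𝓜(α, ε, Z, ψ) = 0}`. -/
def PBCeps (f : ℕ → X → X) (ψ : X → ℝ) (Z : Set X) (ε : ℝ) : EReal :=
  sInf (Real.toEReal '' {α : ℝ | MlimC f ψ Z α ε = 0})

/-- The Pesin–Pitskel topological pressure `P^B_{f_{1,∞}}(Z, ψ) = lim_{ε→0} P^B(ε, Z, ψ)`. -/
def PB (f : ℕ → X → X) (ψ : X → ℝ) (Z : Set X) : EReal :=
  limUnder (nhdsWithin 0 (Ioi 0)) fun ε : ℝ => PBeps f ψ Z ε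

/-- `W(n, α, ε, Z, ψ)`: the weighted analogue of `Mpre`. -/
def Wpre (f : ℕ → X → X) (ψ : X → ℝ) (Z : Set X) (n : ℕ) (α ε : ℝ) : ℝ≥0∞ :=
  sInf { S : ℝ≥0∞ | ∃ (u : Set ℕ) (cx : ℕ → X) (m : ℕ → ℕ) (c : ℕ → ℝ),
    (∀ i ∈ u, 0 < c i) ∧ (∀ i ∈ u, n ≤ m i) ∧
    (∀ z ∈ Z, 1 ≤ ∑' i : u,
      (bowenBall f (m i) (cx i) ε).indicator (fun _ => ENNReal.ofReal (c i)) z) ∧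
    S = ∑' i : u, ENNReal.ofReal (c i) *
      ENNReal.ofReal (Real.exp (-α * (m i : ℝ) + birkSupBall f ψ (m i) (cx i) ε)) }

/-- `W(α, ε, Z, ψ) = lim_{n→∞} W(n, α, ε, Z, ψ)`. -/
def Wlim (f : ℕ → X → X) (ψ : X → ℝ) (Z : Set X) (α ε : ℝ) : ℝ≥0∞ :=
  ⨆ n : ℕ, Wpre f ψ Z n α ε

/-- `P^W(ε, Z, ψ)`: the critical value of `α` at which `W(α, ε, Z, ψ)` jumps from `∞` to `0`. -/
def PWeps (f : ℕ → X → X) (ψ : X → ℝ) (Z : Set X) (ε : ℝ) : EReal :=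
  sInf (Real.toEReal '' {α : ℝ | Wlim f ψ Z α ε = 0})

/-- The weighted topological pressure `P^W_{f_{1,∞}}(Z, ψ) = lim_{ε→0} P^W(ε, Z, ψ)`. -/
def PW (f : ℕ → X → X) (ψ : X → ℝ) (Z : Set X) : EReal :=
  limUnder (nhdsWithin 0 (Ioi 0)) fun ε : ℝ => PWeps f ψ Z ε

/-- Bowen topological entropy `h^B_top(f_{1,∞}, Z)`, i.e. pressure of the zero potential. -/
def hBtop (f : ℕ → X → X) (Z : Set X) : EReal := PB f (fun _ => 0) Z

/-- Weighted Bowen topological entropy `h^{WB}_top(f_{1,∞}, Z)`. -/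
def hWBtop (f : ℕ → X → X) (Z : Set X) : EReal := PW f (fun _ => 0) Z

/-- `EReal → ℝ≥0∞`, sending `⊤` to `⊤` and everything negative to `0`. -/
def ERealToENNReal (x : EReal) : ℝ≥0∞ := if x = ⊤ then ⊤ else ENNReal.ofReal x.toReal


set_option linter.unusedSectionVars false
set_option linter.unusedVariables false

section Helpers

namespace NDSaux

variable {f : ℕ → X → X} {ψ : X → ℝ}

lemma bowenBall_mono {f : ℕ → X → X} {n : ℕ} {x : X} {ε ε' : ℝ} (h : ε ≤ ε') :
    bowenBall f n x ε ⊆ bowenBall f n x ε' := fun y hy j hj => lt_of_lt_of_le (hy j hj) h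

lemma self_mem_bowenBall {f : ℕ → X → X} {n : ℕ} {x : X} {ε : ℝ} (hε : 0 < ε) :
    x ∈ bowenBall f n x ε := fun j _ => by simpa using hε

lemma abs_birkSum_le {C : ℝ} (hC : ∀ x, |ψ x| ≤ C) (n : ℕ) (y : X) :
    |birkSum f ψ n y| ≤ n * C := by
  calc |birkSum f ψ n y| ≤ ∑ j ∈ Finset.range n, |ψ (nIter f j y)| :=
        Finset.abs_sum_le_sum_abs _ _
    _ ≤ ∑ j ∈ Finset.range n, C := Finset.sum_le_sum fun j _ => hC _
    _ = n * C := by simp [mul_comm]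

lemma bddAbove_birkSum_image {C : ℝ} (hC : ∀ x, |ψ x| ≤ C) (n : ℕ) (s : Set X) :
    BddAbove (birkSum f ψ n '' s) := by
  refine ⟨n * C, fun r hr => ?_⟩
  obtain ⟨y, _, rfl⟩ := hr
  exact (abs_le.1 (abs_birkSum_le hC n y)).2

lemma birkSum_le_birkSupBall {C : ℝ} (hC : ∀ x, |ψ x| ≤ C) {n : ℕ} {x y : X} {ε : ℝ}
    (hy : y ∈ bowenBall f n x ε) : birkSum f ψ n y ≤ birkSupBall f ψ n x ε :=
  le_csSup (bddAbove_birkSum_image hC n _) (mem_image_of_mem _ hy)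

lemma birkSum_sub_le {n : ℕ} {y z : X} {γ δ : ℝ}
    (hvar : ∀ a b : X, dist a b < γ → |ψ a - ψ b| ≤ δ)
    (h : ∀ j < n, dist (nIter f j y) (nIter f j z) < γ) :
    birkSum f ψ n y ≤ birkSum f ψ n z + n * δ := by
  have : birkSum f ψ n y - birkSum f ψ n z ≤ n * δ := by
    rw [birkSum, birkSum, ← Finset.sum_sub_distrib]
    calc ∑ j ∈ Finset.range n, (ψ (nIter f j y) - ψ (nIter f j z))
        ≤ ∑ j ∈ Finset.range n, δ := by
          refine Finset.sum_le_sum fun j hj => ?_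
          have := hvar _ _ (h j (Finset.mem_range.1 hj))
          exact (abs_le.1 this).2
      _ = n * δ := by simp [mul_comm]
  linarith

lemma birkSupBall_le_birkSum_add {C : ℝ} (hC : ∀ x, |ψ x| ≤ C) {n : ℕ} {x z : X} {ε γ δ : ℝ}
    (hε : 0 < ε) (hvar : ∀ a b : X, dist a b < γ → |ψ a - ψ b| ≤ δ)
    (hz : ∀ y ∈ bowenBall f n x ε, ∀ j < n, dist (nIter f j y) (nIter f j z) < γ) :
    birkSupBall f ψ n x ε ≤ birkSum f ψ n z + n * δ := by
  refine csSup_le ⟨birkSum f ψ n x, mem_image_of_mem _ (self_mem_bowenBall hε)⟩ ?_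
  rintro r ⟨y, hy, rfl⟩
  exact birkSum_sub_le hvar (hz y hy)

end NDSaux

open NDSaux

/-- split a tsum over a subset of ℕ according to the value of `m`. -/
lemma tsum_split (u : Set ℕ) (m : ℕ → ℕ) (g : ℕ → ℝ≥0∞) :
    ∑' i : u, g i = ∑' k : ℕ, ∑' i : ({i | i ∈ u ∧ m i = k} : Set ℕ), g i := by
  have h1 : ∀ (s : Set ℕ), ∑' i : s, g i = ∑' i : ℕ, s.indicator g i := fun s =>
    tsum_subtype s g
  have key : ∀ i : ℕ, u.indicator g i
      = ∑' k : ℕ, ({i | i ∈ u ∧ m i = k} : Set ℕ).indicator g i := by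
    intro i
    rw [tsum_eq_single (m i) ?_]
    · by_cases hi : i ∈ u
      · simp [Set.indicator, hi]
      · simp [Set.indicator, hi]
    · intro k hk
      have : i ∉ {i | i ∈ u ∧ m i = k} := fun h => hk h.2.symm
      simp [Set.indicator, this]
  calc ∑' i : u, g i = ∑' i : ℕ, u.indicator g i := h1 u
    _ = ∑' i : ℕ, ∑' k : ℕ, ({i | i ∈ u ∧ m i = k} : Set ℕ).indicator g i :=
        tsum_congr key
    _ = ∑' k : ℕ, ∑' i : ℕ, ({i | i ∈ u ∧ m i = k} : Set ℕ).indicator g i :=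
        ENNReal.tsum_comm
    _ = _ := tsum_congr fun k => (h1 _).symm

lemma EReal_le_sInf_add (x : EReal) (B : Set EReal) (δ : ℝ)
    (h : ∀ β ∈ B, x ≤ β + (δ : EReal)) : x ≤ sInf B + (δ : EReal) := by
  rw [← EReal.sub_le_iff_le_add (by simp) (by simp)]
  refine le_sInf fun β hβ => ?_
  rw [EReal.sub_le_iff_le_add (by simp) (by simp)]
  exact h β hβ

/-- In a compact space, a `4ε`-separated-in-`d_k` family is finite, with uniform
cardinality bound. -/
lemma sep_card_bound [CompactSpace X] (f : ℕ → X → X)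
    (k : ℕ) {ε : ℝ} (hε : 0 < ε) :
    ∃ N : ℕ, ∀ s : Finset X,
      (∀ z ∈ s, ∀ z' ∈ s, z ≠ z' →
        ∃ j < k, 4 * ε ≤ dist (nIter f j z) (nIter f j z')) → s.card ≤ N := by
  classical
  have hco : IsCompact (Set.univ : Set (Fin k → X)) := isCompact_univ
  obtain ⟨t, htf, htc⟩ := (Metric.totallyBounded_iff.1 hco.totallyBounded) (2 * ε)
    (by linarith)
  refine ⟨htf.toFinset.card, fun s hs => ?_⟩
  set F : X → (Fin k → X) := fun x j => nIter f j x with hF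
  have hchoice : ∀ z : X, ∃ y ∈ htf.toFinset, F z ∈ Metric.ball y (2 * ε) := by
    intro z
    have := htc (Set.mem_univ (F z))
    simp only [Set.mem_iUnion] at this
    obtain ⟨y, hy1, hy2⟩ := this
    exact ⟨y, htf.mem_toFinset.2 hy1, hy2⟩
  choose G hG1 hG2 using hchoice
  refine Finset.card_le_card_of_injOn G (fun z _ => hG1 z) ?_
  intro z hz z' hz' hGz
  by_contra hne
  obtain ⟨j, hj, hd⟩ := hs z hz z' hz' hne
  have tri : dist (F z) (F z') ≤ dist (F z) (G z) + dist (F z') (G z) :=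
    dist_triangle_right (F z) (F z') (G z)
  have hd1 : dist (F z) (F z') < 4 * ε := by
    have h2 : dist (F z') (G z) < 2 * ε := by rw [hGz]; exact hG2 z'
    have h3 : dist (F z) (G z) < 2 * ε := hG2 z
    calc dist (F z) (F z') ≤ dist (F z) (G z) + dist (F z') (G z) := tri
      _ < 2 * ε + 2 * ε := add_lt_add h3 h2
      _ = 4 * ε := by ring
  have : dist (F z ⟨j, hj⟩) (F z' ⟨j, hj⟩) < 4 * ε :=
    lt_of_le_of_lt (dist_le_pi_dist (F z) (F z') ⟨j, hj⟩) hd1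
  exact absurd this (not_lt.2 hd)

lemma max_sep_subset [CompactSpace X] (f : ℕ → X → X) (k : ℕ) {ε : ℝ} (hε : 0 < ε)
    (W : Set X) :
    ∃ s : Finset X, ↑s ⊆ W ∧
      (∀ z ∈ s, ∀ z' ∈ s, z ≠ z' →
        ∃ j < k, 4 * ε ≤ dist (nIter f j z) (nIter f j z')) ∧
      ∀ w ∈ W, ∃ z ∈ s, ∀ j < k, dist (nIter f j w) (nIter f j z) < 4 * ε := by
  classical
  obtain ⟨N, hN⟩ := sep_card_bound f k hε
  set Sep : Finset X → Prop := fun s => ∀ z ∈ s, ∀ z' ∈ s, z ≠ z' →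
    ∃ j < k, 4 * ε ≤ dist (nIter f j z) (nIter f j z') with hSep
  set cards : Set ℕ := {n | ∃ s : Finset X, ↑s ⊆ W ∧ Sep s ∧ s.card = n} with hcards
  have hne : cards.Nonempty := ⟨0, ∅, by simp, by simp [hSep], rfl⟩
  have hbdd : BddAbove cards := by
    refine ⟨N, fun n hn => ?_⟩
    obtain ⟨s, _, hs2, rfl⟩ := hn
    exact hN s hs2
  obtain ⟨s, hsW, hsSep, hscard⟩ := Nat.sSup_mem hne hbdd
  refine ⟨s, hsW, hsSep, fun w hw => ?_⟩
  by_contra hcon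
  push_neg at hcon
  have hsep' : ∀ z ∈ s, ∃ j < k, 4 * ε ≤ dist (nIter f j w) (nIter f j z) := by
    intro z hz
    obtain ⟨j, hj, hd⟩ := hcon z hz
    exact ⟨j, hj, hd⟩
  have hwns : w ∉ s := by
    intro hws
    obtain ⟨j, _, hd⟩ := hsep' w hws
    simp only [dist_self] at hd
    linarith
  have hins : Sep (insert w s) := by
    intro z hz z' hz' hne'
    rcases Finset.mem_insert.1 hz with h | h
    · rcases Finset.mem_insert.1 hz' with h' | h'
      · exact absurd (h.trans h'.symm) hne'
      · exact h ▸ hsep' z' h'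
    · rcases Finset.mem_insert.1 hz' with h' | h'
      · obtain ⟨j, hj, hd⟩ := hsep' z h
        exact ⟨j, hj, by rw [h']; rwa [dist_comm]⟩
      · exact hsSep z h z' h' hne'
  have hmem : (insert w s).card ∈ cards :=
    ⟨insert w s, by
      rw [Finset.coe_insert]
      exact Set.insert_subset hw hsW, hins, rfl⟩
  have := le_csSup hbdd hmem
  rw [Finset.card_insert_of_notMem hwns, hscard] at this
  omega

end Helpers


section KeyLemma

open NDSaux

variable {X : Type} [MetricSpace X] [CompactSpace X]

/-- The key covering estimate: from a weighted cover at scale `ε` we obtain an honest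
cover at scale `6ε`, at the cost of increasing `α` by `δ`. -/
lemma Mpre_le_of_weighted (f : ℕ → X → X) (ψ : X → ℝ) {C : ℝ} (hC : ∀ x, |ψ x| ≤ C)
    (Z : Set X) (n : ℕ) (α : ℝ) {δ ε : ℝ} (hδ : 0 < δ) (hε : 0 < ε)
    (hvar : ∀ a b : X, dist a b < 7 * ε → |ψ a - ψ b| ≤ δ / 2)
    (u : Set ℕ) (cx : ℕ → X) (m : ℕ → ℕ) (c : ℕ → ℝ)
    (hm : ∀ i ∈ u, n ≤ m i)
    (hcov : ∀ z ∈ Z, 1 ≤ ∑' i : u,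
      (bowenBall f (m i) (cx i) ε).indicator (fun _ => ENNReal.ofReal (c i)) z) :
    Mpre f ψ Z n (α + δ) (6 * ε) ≤ ENNReal.ofReal (2 / (1 - Real.exp (-δ / 4))) *
      ∑' i : u, ENNReal.ofReal (c i) *
        ENNReal.ofReal (Real.exp (-α * (m i : ℝ) + birkSupBall f ψ (m i) (cx i) ε)) := by
  classical
  set ρ : ℝ := Real.exp (-δ / 4) with hρdef
  have hρ0 : 0 < ρ := Real.exp_pos _
  have hρ1 : ρ < 1 := by
    rw [hρdef]
    apply Real.exp_lt_one_iff.2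
    linarith
  have h1ρ : (0:ℝ) < 1 - ρ := by linarith
  set CC : ℝ := 2 / (1 - ρ) with hCCdef
  have hCC0 : 0 ≤ CC := by positivity
  set t : ℕ → ℝ := fun k => (1 - ρ) / 2 * ρ ^ k with htdef
  have ht0 : ∀ k, 0 < t k := fun k => mul_pos (by linarith) (pow_pos hρ0 k)
  -- the level sets
  set uk : ℕ → Set ℕ := fun k => {i | i ∈ u ∧ m i = k} with hukdef
  set g : X → ℕ → ℝ≥0∞ := fun z i =>
    (bowenBall f (m i) (cx i) ε).indicator (fun _ => ENNReal.ofReal (c i)) z with hgdef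
  set wt : ℕ → X → ℝ≥0∞ := fun k z => ∑' i : uk k, g z i with hwtdef
  set Zk : ℕ → Set X := fun k => {z | z ∈ Z ∧ ENNReal.ofReal (t k) ≤ wt k z} with hZkdef
  -- sum of the thresholds
  have htsum : ∑' k : ℕ, ENNReal.ofReal (t k) < 1 := by
    have hsum : Summable t := by
      apply Summable.mul_left
      exact summable_geometric_of_lt_one hρ0.le hρ1
    have heq : ∑' k : ℕ, ENNReal.ofReal (t k) = ENNReal.ofReal (∑' k, t k) :=
      (ENNReal.ofReal_tsum_of_nonneg (fun k => (ht0 k).le) hsum).symm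
    rw [heq]
    have htv : ∑' k, t k = (1 - ρ) / 2 * (1 - ρ)⁻¹ := by
      rw [htdef, tsum_mul_left, tsum_geometric_of_lt_one hρ0.le hρ1]
    rw [htv]
    apply ENNReal.ofReal_lt_one.2
    rw [div_mul_eq_mul_div, mul_inv_cancel₀ (by linarith)]
    norm_num
  -- every point of Z lies in some Zk
  have hZcov : ∀ z ∈ Z, ∃ k, z ∈ Zk k := by
    intro z hz
    by_contra hcon
    push_neg at hcon
    have h1 : ∀ k, wt k z ≤ ENNReal.ofReal (t k) := by
      intro k
      have hck := hcon k
      rw [hZkdef] at hck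
      simp only [Set.mem_setOf_eq] at hck
      exact le_of_not_ge fun hle => hck ⟨hz, hle⟩
    have h2 : (1 : ℝ≥0∞) ≤ ∑' k, wt k z := by
      have := hcov z hz
      rwa [tsum_split u m (g z)] at this
    exact absurd (h2.trans (ENNReal.tsum_le_tsum h1)) (not_le.2 htsum)
  -- choice of a covering ball for points of Zk
  have hφex : ∀ (k : ℕ) (z : X), z ∈ Zk k →
      ∃ i, i ∈ uk k ∧ z ∈ bowenBall f (m i) (cx i) ε := by
    intro k z hzk
    have hwt : 0 < wt k z := lt_of_lt_of_le (ENNReal.ofReal_pos.2 (ht0 k)) hzk.2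
    by_contra hcon
    push_neg at hcon
    have hz0 : wt k z = 0 := by
      rw [hwtdef]
      simp only
      rw [ENNReal.tsum_eq_zero]
      rintro ⟨i, hi⟩
      have hnb : z ∉ bowenBall f (m i) (cx i) ε := hcon i hi
      simp [hgdef, Set.indicator_of_notMem hnb]
    rw [hz0] at hwt
    exact lt_irrefl _ hwt
  choose! φ hφ1 hφ2 using hφex
  -- the maximal separated sets
  have hsel : ∀ k : ℕ, ∃ s : Finset X, ↑s ⊆ Zk k ∧
      (∀ z ∈ s, ∀ z' ∈ s, z ≠ z' →
        ∃ j < k, 4 * ε ≤ dist (nIter f j z) (nIter f j z')) ∧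
      ∀ w ∈ Zk k, ∃ z ∈ s, ∀ j < k, dist (nIter f j w) (nIter f j z) < 4 * ε :=
    fun k => max_sep_subset f k hε (Zk k)
  choose s hs1 hs2 hs3 using hsel
  -- the index set of the new cover
  set u'' : Set ℕ := {i | ∃ k, ∃ z ∈ s k, φ k z = i} with hu''def
  have hlevel : ∀ k, ∀ z ∈ s k, φ k z ∈ uk k ∧ z ∈ bowenBall f (m (φ k z)) (cx (φ k z)) ε := by
    intro k z hz
    have hzk := hs1 k hz
    exact ⟨hφ1 k z hzk, hφ2 k z hzk⟩
  have hsub'' : u'' ⊆ u := by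
    rintro i ⟨k, z, hz, rfl⟩
    exact (hlevel k z hz).1.1
  have hm'' : ∀ i ∈ u'', n ≤ m i := fun i hi => hm i (hsub'' hi)
  -- coverage at scale 6ε
  have hcov'' : Z ⊆ ⋃ i ∈ u'', bowenBall f (m i) (cx i) (6 * ε) := by
    intro w hw
    obtain ⟨k, hwk⟩ := hZcov w hw
    obtain ⟨z, hzs, hzd⟩ := hs3 k w hwk
    have hlev := hlevel k z hzs
    have hmk : m (φ k z) = k := hlev.1.2
    refine Set.mem_iUnion.2 ⟨φ k z, Set.mem_iUnion.2 ⟨⟨k, z, hzs, rfl⟩, ?_⟩⟩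
    intro j hj
    rw [hmk] at hj
    have h1 : dist (nIter f j (cx (φ k z))) (nIter f j z) < ε := hlev.2 j (by rwa [hmk])
    have h2 : dist (nIter f j w) (nIter f j z) < 4 * ε := hzd j hj
    calc dist (nIter f j (cx (φ k z))) (nIter f j w)
        ≤ dist (nIter f j (cx (φ k z))) (nIter f j z) + dist (nIter f j z) (nIter f j w) :=
          dist_triangle _ _ _
      _ < ε + 4 * ε := add_lt_add h1 (by rwa [dist_comm])
      _ ≤ 6 * ε := by linarith
  -- the new cover is admissible for Mpre
  set E' : ℕ → ℝ≥0∞ := fun i =>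
    ENNReal.ofReal (Real.exp (-(α + δ) * (m i : ℝ) + birkSupBall f ψ (m i) (cx i) (6 * ε)))
    with hE'def
  set e : ℕ → ℝ≥0∞ := fun i => ENNReal.ofReal (c i) *
    ENNReal.ofReal (Real.exp (-α * (m i : ℝ) + birkSupBall f ψ (m i) (cx i) ε)) with hedef
  have hMple : Mpre f ψ Z n (α + δ) (6 * ε) ≤ ∑' i : u'', E' i :=
    sInf_le ⟨u'', cx, m, hm'', hcov'', rfl⟩
  refine hMple.trans ?_
  -- injectivity of φ k on s k
  have hinj : ∀ k, Set.InjOn (φ k) (s k : Set X) := by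
    intro k z hz z' hz' hzz
    by_contra hne
    obtain ⟨j, hj, hd⟩ := hs2 k z hz z' hz' hne
    have hm1 : m (φ k z) = k := (hlevel k z hz).1.2
    have hm2 : m (φ k z') = k := (hlevel k z' hz').1.2
    have h1 : dist (nIter f j (cx (φ k z))) (nIter f j z) < ε :=
      (hlevel k z hz).2 j (by rw [hm1]; exact hj)
    have h2 : dist (nIter f j (cx (φ k z))) (nIter f j z') < ε := by
      have := (hlevel k z' hz').2 j (by rw [hm2]; exact hj)
      rwa [← hzz] at this
    have hlt : dist (nIter f j z) (nIter f j z') < 2 * ε := by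
      calc dist (nIter f j z) (nIter f j z')
          ≤ dist (nIter f j (cx (φ k z))) (nIter f j z)
            + dist (nIter f j (cx (φ k z))) (nIter f j z') := dist_triangle_left _ _ _
        _ < ε + ε := add_lt_add h1 h2
        _ = 2 * ε := by ring
    linarith
  -- level decomposition of the new sum
  have hlevels : ∀ k, {i | i ∈ u'' ∧ m i = k} = ↑((s k).image (φ k)) := by
    intro k
    ext i
    simp only [Set.mem_setOf_eq, Finset.coe_image, Set.mem_image, Finset.mem_coe]
    constructor
    · rintro ⟨⟨k', z, hz, rfl⟩, hmk⟩
      have hk' : k' = k := by rw [← hmk, (hlevel k' z hz).1.2]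
      subst hk'
      exact ⟨z, hz, rfl⟩
    · rintro ⟨z, hz, rfl⟩
      exact ⟨⟨k, z, hz, rfl⟩, (hlevel k z hz).1.2⟩
  have hsplit : ∑' i : u'', E' i = ∑' k : ℕ, ∑ z ∈ s k, E' (φ k z) := by
    rw [tsum_split u'' m E']
    refine tsum_congr fun k => ?_
    rw [hlevels k]
    rw [tsum_subtype]
    rw [tsum_eq_sum (s := (s k).image (φ k))
      (fun i hi => Set.indicator_of_notMem (by simpa using hi) _)]
    rw [Finset.sum_image (fun z hz z' hz' h => hinj k hz hz' h)]
    refine Finset.sum_congr rfl fun z hz => ?_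
    refine Set.indicator_of_mem ?_ _
    simp only [Finset.coe_image, Set.mem_image, Finset.mem_coe]
    exact ⟨z, hz, rfl⟩
  rw [hsplit]
  -- the sets of indices whose ball contains z
  set Iz : ℕ → X → Set ℕ := fun k z => {i | i ∈ uk k ∧ z ∈ bowenBall f (m i) (cx i) ε}
    with hIzdef
  -- the per-point estimate
  have hIz : ∀ k, ∀ z ∈ s k, E' (φ k z) ≤ ENNReal.ofReal CC *
      ∑' i : ℕ, (Iz k z).indicator e i := by
    intro k z hzs
    have hzk := hs1 k hzs
    -- weight of Iz
    have hwt : ENNReal.ofReal (t k)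
        ≤ ∑' i : ℕ, (Iz k z).indicator (fun i => ENNReal.ofReal (c i)) i := by
      refine hzk.2.trans (le_of_eq ?_)
      rw [hwtdef]
      simp only
      rw [tsum_subtype]
      refine tsum_congr fun i => ?_
      by_cases hi : i ∈ Iz k z
      · rw [Set.indicator_of_mem hi, Set.indicator_of_mem hi.1, hgdef]
        simp only
        rw [Set.indicator_of_mem hi.2]
      · by_cases hiu : i ∈ uk k
        · have hiz : z ∉ bowenBall f (m i) (cx i) ε := fun hb => hi ⟨hiu, hb⟩
          rw [Set.indicator_of_notMem hi, Set.indicator_of_mem hiu, hgdef]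
          simp only
          rw [Set.indicator_of_notMem hiz]
        · rw [Set.indicator_of_notMem hi, Set.indicator_of_notMem hiu]
    -- per-index comparison
    have hmφ : m (φ k z) = k := (hlevel k z hzs).1.2
    have hcomp : ∀ i ∈ Iz k z, E' (φ k z) ≤ ENNReal.ofReal (Real.exp (-(k : ℝ) * δ / 2)) *
        ENNReal.ofReal (Real.exp (-α * (m i : ℝ) + birkSupBall f ψ (m i) (cx i) ε)) := by
      intro i hi
      have hmi : m i = k := hi.1.2
      have hsup : birkSupBall f ψ k (cx (φ k z)) (6 * ε) ≤
          birkSum f ψ k z + k * (δ / 2) := by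
        refine birkSupBall_le_birkSum_add hC (by linarith) hvar ?_
        intro y hy j hj
        have h1 : dist (nIter f j (cx (φ k z))) (nIter f j y) < 6 * ε := hy j hj
        have h2 : dist (nIter f j (cx (φ k z))) (nIter f j z) < ε :=
          (hlevel k z hzs).2 j (by rwa [hmφ])
        calc dist (nIter f j y) (nIter f j z)
            ≤ dist (nIter f j (cx (φ k z))) (nIter f j y)
              + dist (nIter f j (cx (φ k z))) (nIter f j z) := dist_triangle_left _ _ _
          _ < 6 * ε + ε := add_lt_add h1 h2
          _ = 7 * ε := by ring
      have hsum2 : birkSum f ψ k z ≤ birkSupBall f ψ (m i) (cx i) ε := by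
        rw [← hmi]
        exact birkSum_le_birkSupBall hC (f := f) (n := m i) hi.2
      rw [hE'def]
      simp only
      rw [hmφ, ← ENNReal.ofReal_mul (Real.exp_nonneg _), ← Real.exp_add]
      refine ENNReal.ofReal_le_ofReal (Real.exp_le_exp.2 ?_)
      have e4 : ((m i : ℕ) : ℝ) = (k : ℝ) := by rw [hmi]
      rw [e4]
      linarith [hsup, hsum2]
    -- multiply by the weights and sum
    have hmul : E' (φ k z) * ENNReal.ofReal (t k) ≤
        ENNReal.ofReal (Real.exp (-(k : ℝ) * δ / 2)) * ∑' i : ℕ, (Iz k z).indicator e i := by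
      calc E' (φ k z) * ENNReal.ofReal (t k)
          ≤ E' (φ k z) * ∑' i : ℕ, (Iz k z).indicator (fun i => ENNReal.ofReal (c i)) i :=
            mul_le_mul_right hwt _
        _ = ∑' i : ℕ, (Iz k z).indicator (fun i => ENNReal.ofReal (c i)) i * E' (φ k z) := by
            rw [ENNReal.tsum_mul_right]
            exact mul_comm _ _
        _ ≤ ∑' i : ℕ, (Iz k z).indicator e i * ENNReal.ofReal (Real.exp (-(k : ℝ) * δ / 2)) := by
            refine ENNReal.tsum_le_tsum fun i => ?_
            by_cases hi : i ∈ Iz k z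
            · rw [Set.indicator_of_mem hi, Set.indicator_of_mem hi, hedef]
              simp only
              calc ENNReal.ofReal (c i) * E' (φ k z)
                  ≤ ENNReal.ofReal (c i) * (ENNReal.ofReal (Real.exp (-(k : ℝ) * δ / 2)) *
                    ENNReal.ofReal (Real.exp (-α * (m i : ℝ)
                      + birkSupBall f ψ (m i) (cx i) ε))) :=
                    mul_le_mul_right (hcomp i hi) _
                _ = ENNReal.ofReal (c i) *
                    ENNReal.ofReal (Real.exp (-α * (m i : ℝ)
                      + birkSupBall f ψ (m i) (cx i) ε)) *
                    ENNReal.ofReal (Real.exp (-(k : ℝ) * δ / 2)) := by ring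
            · rw [Set.indicator_of_notMem hi, Set.indicator_of_notMem hi, zero_mul, zero_mul]
        _ = ENNReal.ofReal (Real.exp (-(k : ℝ) * δ / 2)) * ∑' i : ℕ, (Iz k z).indicator e i := by
            rw [ENNReal.tsum_mul_right]
            exact mul_comm _ _
    -- divide by the weight
    have hT0 : ENNReal.ofReal (t k) ≠ 0 := (ENNReal.ofReal_pos.2 (ht0 k)).ne'
    have hTtop : ENNReal.ofReal (t k) ≠ ⊤ := ENNReal.ofReal_ne_top
    have hEid : E' (φ k z) = E' (φ k z) * ENNReal.ofReal (t k) * (ENNReal.ofReal (t k))⁻¹ := by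
      rw [mul_assoc, ENNReal.mul_inv_cancel hT0 hTtop, mul_one]
    rw [hEid]
    calc E' (φ k z) * ENNReal.ofReal (t k) * (ENNReal.ofReal (t k))⁻¹
        ≤ ENNReal.ofReal (Real.exp (-(k : ℝ) * δ / 2)) *
          (∑' i : ℕ, (Iz k z).indicator e i) * (ENNReal.ofReal (t k))⁻¹ :=
          mul_le_mul_left hmul _
      _ = ENNReal.ofReal (Real.exp (-(k : ℝ) * δ / 2)) * (ENNReal.ofReal (t k))⁻¹ *
          ∑' i : ℕ, (Iz k z).indicator e i := by ring
      _ ≤ ENNReal.ofReal CC * ∑' i : ℕ, (Iz k z).indicator e i := by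
          refine mul_le_mul_left ?_ _
          rw [← ENNReal.ofReal_inv_of_pos (ht0 k), ← ENNReal.ofReal_mul (Real.exp_nonneg _)]
          refine ENNReal.ofReal_le_ofReal ?_
          rw [← div_eq_mul_inv, div_le_iff₀ (ht0 k)]
          have hCCt : CC * t k = ρ ^ k := by
            rw [hCCdef, htdef]
            field_simp
          rw [hCCt]
          have hρk : ρ ^ k = Real.exp ((k : ℝ) * (-δ / 4)) := by
            rw [hρdef, ← Real.exp_nat_mul]
          rw [hρk]
          refine Real.exp_le_exp.2 ?_
          have hk0 : (0:ℝ) ≤ (k : ℝ) := Nat.cast_nonneg k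
          nlinarith
  -- assemble
  calc ∑' k : ℕ, ∑ z ∈ s k, E' (φ k z)
      ≤ ∑' k : ℕ, ∑ z ∈ s k, (ENNReal.ofReal CC * ∑' i : ℕ, (Iz k z).indicator e i) :=
        ENNReal.tsum_le_tsum fun k => Finset.sum_le_sum fun z hz => hIz k z hz
    _ = ENNReal.ofReal CC * ∑' k : ℕ, ∑ z ∈ s k, ∑' i : ℕ, (Iz k z).indicator e i := by
        rw [← ENNReal.tsum_mul_left]
        refine tsum_congr fun k => ?_
        rw [Finset.mul_sum]
    _ ≤ ENNReal.ofReal CC * ∑' k : ℕ, ∑' i : ℕ, (uk k).indicator e i := by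
        refine mul_le_mul_right (ENNReal.tsum_le_tsum fun k => ?_) _
        rw [← Summable.tsum_finsetSum (fun z _ => ENNReal.summable)]
        refine ENNReal.tsum_le_tsum fun i => ?_
        by_cases hex : ∃ z ∈ s k, i ∈ Iz k z
        · obtain ⟨z₀, hz₀, hi₀⟩ := hex
          have hzero : ∀ z ∈ s k, z ≠ z₀ → (Iz k z).indicator e i = 0 := by
            intro z hz hne
            refine Set.indicator_of_notMem (fun hi => ?_) _
            obtain ⟨j, hj, hd⟩ := hs2 k z hz z₀ hz₀ hne
            have hb1 : dist (nIter f j (cx i)) (nIter f j z) < ε :=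
              hi.2 j (by rw [hi.1.2]; exact hj)
            have hb2 : dist (nIter f j (cx i)) (nIter f j z₀) < ε :=
              hi₀.2 j (by rw [hi₀.1.2]; exact hj)
            have : dist (nIter f j z) (nIter f j z₀) < 2 * ε := by
              calc dist (nIter f j z) (nIter f j z₀)
                  ≤ dist (nIter f j (cx i)) (nIter f j z)
                    + dist (nIter f j (cx i)) (nIter f j z₀) := dist_triangle_left _ _ _
                _ < ε + ε := add_lt_add hb1 hb2
                _ = 2 * ε := by ring
            linarith
          rw [Finset.sum_eq_single_of_mem z₀ hz₀ hzero]
          rw [Set.indicator_of_mem hi₀, Set.indicator_of_mem hi₀.1]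
        · push_neg at hex
          have : ∀ z ∈ s k, (Iz k z).indicator e i = 0 := fun z hz =>
            Set.indicator_of_notMem (hex z hz) _
          rw [Finset.sum_eq_zero this]
          exact zero_le
    _ = ENNReal.ofReal CC * ∑' i : u, e i := by
        congr 1
        rw [tsum_split u m e]
        refine (tsum_congr fun k => ?_).symm
        rw [tsum_subtype]
    _ = _ := rfl

end KeyLemma

variable [MeasurableSpace X]

/-- The measure-theoretic local pressure
`P_μ(x,ψ) = lim_{ε→0} liminf_{n→∞} (-log μ(B_n(x,ε)) + S_{1,n}ψ(x))/n`. -/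
def Ploc (f : ℕ → X → X) (μ : Measure X) (ψ : X → ℝ) (x : X) : EReal :=
  limUnder (nhdsWithin 0 (Ioi 0)) fun ε : ℝ =>
    Filter.atTop.liminf fun n : ℕ =>
      (((n : ℝ)⁻¹ : ℝ) : EReal) *
        (-(ENNReal.log (μ (bowenBall f n x ε))) + ((birkSum f ψ n x : ℝ) : EReal))

/-- The integral of an extended-real-valued function: the difference of the lower integrals of
its positive and negative parts. -/
def ERealIntegral (μ : Measure X) (g : X → EReal) : EReal :=
  ((∫⁻ x, ERealToENNReal (g x) ∂μ : ℝ≥0∞) : EReal)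
    - ((∫⁻ x, ERealToENNReal (-(g x)) ∂μ : ℝ≥0∞) : EReal)

/-- The measure-theoretic pressure `P_μ(X, ψ) = ∫ P_μ(x, ψ) dμ(x)`. -/
def Pmeas (f : ℕ → X → X) (μ : Measure X) (ψ : X → ℝ) : EReal :=
  ERealIntegral μ (Ploc f μ ψ)

/-- The measure-theoretic local lower entropy `h̲_μ(f_{1,∞}, x)`. -/
def hloc (f : ℕ → X → X) (μ : Measure X) (x : X) : EReal := Ploc f μ (fun _ => 0) x

/-- The measure-theoretic lower entropy `h̲_μ(f_{1,∞}) = ∫ h̲_μ(f_{1,∞}, x) dμ(x)`. -/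
def hmeas (f : ℕ → X → X) (μ : Measure X) : EReal := Pmeas f μ (fun _ => 0)



section Bridge

open NDSaux

variable {X : Type} [MetricSpace X]

lemma Wpre_le_Mpre (f : ℕ → X → X) (ψ : X → ℝ) (Z : Set X) (n : ℕ) (α ε : ℝ) :
    Wpre f ψ Z n α ε ≤ Mpre f ψ Z n α ε := by
  apply sInf_le_sInf
  rintro S ⟨u, c, m, hm, hcov, rfl⟩
  refine ⟨u, c, m, fun _ => (1 : ℝ), fun i _ => one_pos, hm, ?_, ?_⟩
  · intro z hz
    obtain ⟨i, hiu, hib⟩ := Set.mem_iUnion₂.1 (hcov hz)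
    calc (1 : ℝ≥0∞) = (bowenBall f (m i) (c i) ε).indicator
          (fun _ => ENNReal.ofReal (1 : ℝ)) z := by
          rw [Set.indicator_of_mem hib, ENNReal.ofReal_one]
      _ ≤ ∑' i : u, (bowenBall f (m i) (c i) ε).indicator
          (fun _ => ENNReal.ofReal (1 : ℝ)) z := ENNReal.le_tsum (⟨i, hiu⟩ : ↥u)
  · refine tsum_congr fun i => ?_
    rw [ENNReal.ofReal_one, one_mul]

lemma PWeps_le_PBeps (f : ℕ → X → X) (ψ : X → ℝ) (Z : Set X) (ε : ℝ) :
    PWeps f ψ Z ε ≤ PBeps f ψ Z ε := by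
  apply sInf_le_sInf
  apply Set.image_mono
  intro α hα
  simp only [Set.mem_setOf_eq] at hα ⊢
  refine le_antisymm ?_ (zero_le)
  rw [← hα]
  exact iSup_mono fun n => Wpre_le_Mpre f ψ Z n α ε

lemma Mlim_zero_of_Wlim_zero [CompactSpace X] (f : ℕ → X → X) (ψ : X → ℝ) {C : ℝ}
    (hC : ∀ x, |ψ x| ≤ C) (Z : Set X) (α : ℝ) {δ ε : ℝ} (hδ : 0 < δ) (hε : 0 < ε)
    (hvar : ∀ a b : X, dist a b < 7 * ε → |ψ a - ψ b| ≤ δ / 2)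
    (hW : Wlim f ψ Z α ε = 0) : Mlim f ψ Z (α + δ) (6 * ε) = 0 := by
  have hKpos : 0 < 2 / (1 - Real.exp (-δ / 4)) := by
    have h1 : Real.exp (-δ / 4) < 1 := Real.exp_lt_one_iff.2 (by linarith)
    have h2 : (0:ℝ) < 1 - Real.exp (-δ / 4) := by linarith
    exact div_pos two_pos h2
  set K : ℝ≥0∞ := ENNReal.ofReal (2 / (1 - Real.exp (-δ / 4))) with hKdef
  have hK0 : K ≠ 0 := (ENNReal.ofReal_pos.2 hKpos).ne'
  have hKtop : K ≠ ⊤ := ENNReal.ofReal_ne_top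
  rw [Mlim, ENNReal.iSup_eq_zero]
  intro n
  have hWn : Wpre f ψ Z n α ε = 0 :=
    le_antisymm (le_trans (le_iSup (fun n => Wpre f ψ Z n α ε) n) hW.le) (zero_le)
  refine le_antisymm ?_ (zero_le)
  refine ENNReal.le_of_forall_pos_le_add fun η hη _ => ?_
  rw [zero_add]
  have hne : { S : ℝ≥0∞ | ∃ (u : Set ℕ) (cx : ℕ → X) (m : ℕ → ℕ) (c : ℕ → ℝ),
      (∀ i ∈ u, 0 < c i) ∧ (∀ i ∈ u, n ≤ m i) ∧
      (∀ z ∈ Z, 1 ≤ ∑' i : u,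
        (bowenBall f (m i) (cx i) ε).indicator (fun _ => ENNReal.ofReal (c i)) z) ∧
      S = ∑' i : u, ENNReal.ofReal (c i) *
        ENNReal.ofReal (Real.exp (-α * (m i : ℝ) + birkSupBall f ψ (m i) (cx i) ε)) }.Nonempty := by
    by_contra hcon
    rw [Set.not_nonempty_iff_eq_empty] at hcon
    rw [Wpre, hcon, sInf_empty] at hWn
    exact ENNReal.top_ne_zero hWn
  have hlt : Wpre f ψ Z n α ε < (η : ℝ≥0∞) / K := by
    rw [hWn]
    exact ENNReal.div_pos (by exact_mod_cast hη.ne' : (η:ℝ≥0∞) ≠ 0) hKtop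
  rw [Wpre] at hlt
  obtain ⟨S, hS, hSlt⟩ := sInf_lt_iff.1 hlt
  obtain ⟨u, cx, m, c, _, hm, hcov, rfl⟩ := hS
  have hkey := Mpre_le_of_weighted f ψ hC Z n α hδ hε hvar u cx m c hm hcov
  refine hkey.trans ?_
  rw [← hKdef]
  calc K * ∑' i : u, ENNReal.ofReal (c i) *
        ENNReal.ofReal (Real.exp (-α * (m i : ℝ) + birkSupBall f ψ (m i) (cx i) ε))
      ≤ K * ((η : ℝ≥0∞) / K) := mul_le_mul_right hSlt.le _
    _ = (η : ℝ≥0∞) := ENNReal.mul_div_cancel hK0 hKtop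

lemma Mlim_zero_mono_eps (f : ℕ → X → X) (ψ : X → ℝ) {C : ℝ}
    (hC : ∀ x, |ψ x| ≤ C) (Z : Set X) (α : ℝ) {δ ε ε' : ℝ} (hε' : 0 < ε') (hεε : ε' ≤ ε)
    (hvar : ∀ a b : X, dist a b < ε → |ψ a - ψ b| ≤ δ)
    (h : Mlim f ψ Z α ε' = 0) : Mlim f ψ Z (α + δ) ε = 0 := by
  have hε : 0 < ε := lt_of_lt_of_le hε' hεε
  rw [Mlim, ENNReal.iSup_eq_zero]
  intro n
  have hn : Mpre f ψ Z n α ε' = 0 :=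
    le_antisymm (le_trans (le_iSup (fun n => Mpre f ψ Z n α ε') n) h.le) (zero_le)
  refine le_antisymm ?_ (zero_le)
  rw [← hn]
  refine le_sInf ?_
  rintro S ⟨u, c, m, hm, hcov, rfl⟩
  have hcov' : Z ⊆ ⋃ i ∈ u, bowenBall f (m i) (c i) ε :=
    hcov.trans (Set.iUnion₂_mono fun i _ => bowenBall_mono hεε)
  refine le_trans (sInf_le ⟨u, c, m, hm, hcov', rfl⟩) ?_
  refine ENNReal.tsum_le_tsum fun i => ?_
  refine ENNReal.ofReal_le_ofReal (Real.exp_le_exp.2 ?_)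
  have h1 : birkSupBall f ψ (m i) (c i) ε ≤ birkSum f ψ (m i) (c i) + (m i) * δ := by
    refine birkSupBall_le_birkSum_add hC hε hvar ?_
    intro y hy j hj
    rw [dist_comm]
    exact hy j hj
  have h2 : birkSum f ψ (m i) (c i) ≤ birkSupBall f ψ (m i) (c i) ε' :=
    birkSum_le_birkSupBall hC (self_mem_bowenBall hε')
  nlinarith [h1, h2]

lemma PBeps_le_PBeps_add (f : ℕ → X → X) (ψ : X → ℝ) {C : ℝ}
    (hC : ∀ x, |ψ x| ≤ C) (Z : Set X) {δ ε ε' : ℝ} (hε' : 0 < ε') (hεε : ε' ≤ ε)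
    (hvar : ∀ a b : X, dist a b < ε → |ψ a - ψ b| ≤ δ) :
    PBeps f ψ Z ε ≤ PBeps f ψ Z ε' + (δ : EReal) := by
  refine EReal_le_sInf_add _ _ _ ?_
  rintro β ⟨α, hα, rfl⟩
  have : Mlim f ψ Z (α + δ) ε = 0 := Mlim_zero_mono_eps f ψ hC Z α hε' hεε hvar hα
  calc PBeps f ψ Z ε ≤ ((α + δ : ℝ) : EReal) :=
        sInf_le ⟨α + δ, this, rfl⟩
    _ = (α : EReal) + (δ : EReal) := by rw [EReal.coe_add]

lemma PBeps6_le_PWeps_add [CompactSpace X] (f : ℕ → X → X) (ψ : X → ℝ) {C : ℝ}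
    (hC : ∀ x, |ψ x| ≤ C) (Z : Set X) {δ ε : ℝ} (hδ : 0 < δ) (hε : 0 < ε)
    (hvar : ∀ a b : X, dist a b < 7 * ε → |ψ a - ψ b| ≤ δ / 2) :
    PBeps f ψ Z (6 * ε) ≤ PWeps f ψ Z ε + (δ : EReal) := by
  refine EReal_le_sInf_add _ _ _ ?_
  rintro β ⟨α, hα, rfl⟩
  have : Mlim f ψ Z (α + δ) (6 * ε) = 0 :=
    Mlim_zero_of_Wlim_zero f ψ hC Z α hδ hε hvar hα
  calc PBeps f ψ Z (6 * ε) ≤ ((α + δ : ℝ) : EReal) :=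
        sInf_le ⟨α + δ, this, rfl⟩
    _ = (α : EReal) + (δ : EReal) := by rw [EReal.coe_add]

end Bridge

/-- The Pesin–Pitskel topological pressure coincides with the weighted
topological pressure on every subset `Z` of `X`. -/
theorem statement13 [CompactSpace X]
    (f : ℕ → X → X) (hf : ∀ n, Continuous (f n)) (ψ : X → ℝ) (hψ : Continuous ψ)
    (Z : Set X) :
    PB f ψ Z = PW f ψ Z := by
  classical
  -- a uniform bound for ψ
  obtain ⟨C, hC⟩ : ∃ C : ℝ, ∀ x : X, |ψ x| ≤ C := by
    obtain ⟨C, hC⟩ := isCompact_univ.exists_bound_of_continuousOn hψ.continuousOn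
    exact ⟨C, fun x => by simpa [Real.norm_eq_abs] using hC x (Set.mem_univ x)⟩
  -- uniform continuity of ψ
  have hUC : ∀ δ : ℝ, 0 < δ → ∃ γ > (0:ℝ), ∀ a b : X, dist a b < γ → |ψ a - ψ b| ≤ δ := by
    intro δ hδ
    have := CompactSpace.uniformContinuous_of_continuous hψ
    obtain ⟨γ, hγ, hγ'⟩ := Metric.uniformContinuous_iff.1 this δ hδ
    exact ⟨γ, hγ, fun a b hab => by
      have := hγ' hab
      rw [Real.dist_eq] at this
      exact this.le⟩
  set L : EReal := limsup (fun ε : ℝ => PBeps f ψ Z ε) (nhdsWithin 0 (Ioi 0)) with hLdef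
  -- convergence of PBeps
  have hBtendsto : Tendsto (fun ε : ℝ => PBeps f ψ Z ε) (nhdsWithin 0 (Ioi 0)) (nhds L) := by
    refine tendsto_of_le_liminf_of_limsup_le ?_ le_rfl
    by_contra hcon
    push_neg at hcon
    obtain ⟨q2, hq2a, hq2b⟩ := EReal.exists_between_coe_real hcon
    obtain ⟨q1, hq1a, hq1b⟩ := EReal.exists_between_coe_real hq2a
    have hq12 : q1 < q2 := by exact_mod_cast hq1b
    set δ : ℝ := q2 - q1 with hδdef
    have hδ : 0 < δ := by simp [hδdef]; linarith
    obtain ⟨γ, hγ, hγ'⟩ := hUC δ hδ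
    have hfreq : ∃ᶠ ε in nhdsWithin (0:ℝ) (Ioi 0), (q2 : EReal) < PBeps f ψ Z ε :=
      frequently_lt_of_lt_limsup (by isBoundedDefault) hq2b
    have hev : ∀ᶠ ε in nhdsWithin (0:ℝ) (Ioi 0), ε ∈ Ioc (0:ℝ) γ :=
      Ioc_mem_nhdsGT_of_mem ⟨le_refl _, hγ⟩
    obtain ⟨ε₁, hq2lt, hε₁⟩ := (hfreq.and_eventually hev).exists
    have hlow : ∀ᶠ ε' in nhdsWithin (0:ℝ) (Ioi 0), (q1 : EReal) ≤ PBeps f ψ Z ε' := by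
      filter_upwards [Ioc_mem_nhdsGT_of_mem ⟨le_refl (0:ℝ), hε₁.1⟩] with ε' hε'
      have hvar : ∀ a b : X, dist a b < ε₁ → |ψ a - ψ b| ≤ δ := fun a b hab =>
        hγ' a b (lt_of_lt_of_le hab hε₁.2)
      have hstep : PBeps f ψ Z ε₁ ≤ PBeps f ψ Z ε' + (δ : EReal) :=
        PBeps_le_PBeps_add f ψ hC Z hε'.1 hε'.2 hvar
      have h2 : (q2 : EReal) ≤ PBeps f ψ Z ε' + (δ : EReal) := hq2lt.le.trans hstep
      have hcoe : (q1 : EReal) = (q2 : EReal) - (δ : EReal) := by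
        rw [← EReal.coe_sub]
        norm_num [hδdef]
      rw [hcoe]
      exact (EReal.sub_le_iff_le_add (by simp) (by simp)).2 h2
    have hfreq2 : ∃ᶠ ε in nhdsWithin (0:ℝ) (Ioi 0), PBeps f ψ Z ε < (q1 : EReal) :=
      frequently_lt_of_liminf_lt (by isBoundedDefault) hq1a
    obtain ⟨ε₂, hlt2, hge2⟩ := (hfreq2.and_eventually hlow).exists
    exact absurd hge2 (not_le.2 hlt2)
  -- the rescaled family also converges to L
  have hmul6 : Tendsto (fun ε : ℝ => 6 * ε) (nhdsWithin 0 (Ioi 0)) (nhdsWithin 0 (Ioi 0)) := by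
    refine tendsto_nhdsWithin_of_tendsto_nhds_of_eventually_within _ ?_ ?_
    · have h1 : Tendsto (fun ε : ℝ => 6 * ε) (nhds 0) (nhds (6 * 0)) :=
        (continuous_const.mul continuous_id).tendsto 0
      rw [mul_zero] at h1
      exact h1.mono_left nhdsWithin_le_nhds
    · filter_upwards [self_mem_nhdsWithin] with ε hε
      have : (0:ℝ) < ε := hε
      have : (0:ℝ) < 6 * ε := by linarith
      exact this
  have hB6 : Tendsto (fun ε : ℝ => PBeps f ψ Z (6 * ε)) (nhdsWithin 0 (Ioi 0)) (nhds L) :=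
    hBtendsto.comp hmul6
  -- convergence of PWeps to the same limit
  have hWtendsto : Tendsto (fun ε : ℝ => PWeps f ψ Z ε) (nhdsWithin 0 (Ioi 0)) (nhds L) := by
    refine tendsto_of_le_liminf_of_limsup_le ?_ ?_
    · by_contra hcon
      push_neg at hcon
      obtain ⟨q2, hq2a, hq2b⟩ := EReal.exists_between_coe_real hcon
      obtain ⟨q1, hq1a, hq1b⟩ := EReal.exists_between_coe_real hq2a
      have hq12 : q1 < q2 := by exact_mod_cast hq1b
      set δ : ℝ := q2 - q1 with hδdef
      have hδ : 0 < δ := by simp [hδdef]; linarith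
      obtain ⟨γ, hγ, hγ'⟩ := hUC (δ / 2) (by linarith)
      have hev1 : ∀ᶠ ε in nhdsWithin (0:ℝ) (Ioi 0), (q2 : EReal) < PBeps f ψ Z (6 * ε) :=
        hB6.eventually (eventually_gt_nhds hq2b)
      have hev2 : ∀ᶠ ε in nhdsWithin (0:ℝ) (Ioi 0), ε ∈ Ioc (0:ℝ) (γ / 7) :=
        Ioc_mem_nhdsGT_of_mem ⟨le_refl _, by linarith⟩
      have hlow : ∀ᶠ ε in nhdsWithin (0:ℝ) (Ioi 0), (q1 : EReal) ≤ PWeps f ψ Z ε := by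
        filter_upwards [hev1, hev2] with ε h1 h2
        have hvar : ∀ a b : X, dist a b < 7 * ε → |ψ a - ψ b| ≤ δ / 2 := fun a b hab =>
          hγ' a b (lt_of_lt_of_le hab (by linarith [h2.2]))
        have hstep : PBeps f ψ Z (6 * ε) ≤ PWeps f ψ Z ε + (δ : EReal) :=
          PBeps6_le_PWeps_add f ψ hC Z hδ h2.1 hvar
        have h3 : (q2 : EReal) ≤ PWeps f ψ Z ε + (δ : EReal) := h1.le.trans hstep
        have hcoe : (q1 : EReal) = (q2 : EReal) - (δ : EReal) := by
          rw [← EReal.coe_sub]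
          norm_num [hδdef]
        rw [hcoe]
        exact (EReal.sub_le_iff_le_add (by simp) (by simp)).2 h3
      have hfreq2 : ∃ᶠ ε in nhdsWithin (0:ℝ) (Ioi 0), PWeps f ψ Z ε < (q1 : EReal) :=
        frequently_lt_of_liminf_lt (by isBoundedDefault) hq1a
      obtain ⟨ε₂, hlt2, hge2⟩ := (hfreq2.and_eventually hlow).exists
      exact absurd hge2 (not_le.2 hlt2)
    · rw [hLdef]
      exact limsup_le_limsup (Eventually.of_forall fun ε => PWeps_le_PBeps f ψ Z ε)
  rw [PB, PW, hBtendsto.limUnder_eq, hWtendsto.limUnder_eq]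

end
end

section
/- Let (X,d) be a compact metric space, f_{1,∞} an NDS on X, Z ⊆ X, ψ ∈ C(X,ℝ), ε > 0, δ > 0, and α ∈ ℝ. Let N ≥ 2 be such that n² e^{−nδ} ≤ 1 for all n ≥ N. Then 𝓜(N, α+δ, 6ε, Z, ψ) ≤ W(N, α, ε, Z, ψ). -/
open Filter MeasureTheory Set ENNReal

noncomputable section

variable {X : Type} [MetricSpace X]

variable [MeasurableSpace X]

set_option linter.unusedSectionVars false

section AuxS15

variable {f : ℕ → X → X} {ψ : X → ℝ}

lemma nIter_continuous (hf : ∀ n, Continuous (f n)) (j : ℕ) : Continuous (nIter f j) := by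
  induction j with
  | zero => exact continuous_id
  | succ n ih => exact (hf n).comp ih

lemma birkSum_continuous (hf : ∀ n, Continuous (f n)) (hψ : Continuous ψ) (n : ℕ) :
    Continuous (birkSum f ψ n) := by
  unfold birkSum
  exact continuous_finset_sum _ fun j _ => hψ.comp (nIter_continuous hf j)

lemma birkSum_le_birkSupBall [CompactSpace X] (hf : ∀ n, Continuous (f n)) (hψ : Continuous ψ)
    {n : ℕ} {x y : X} {ε : ℝ} (hy : y ∈ bowenBall f n x ε) :
    birkSum f ψ n y ≤ birkSupBall f ψ n x ε := by
  apply le_csSup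
  · exact BddAbove.mono (Set.image_mono (Set.subset_univ _))
      (isCompact_univ.image (birkSum_continuous hf hψ n)).bddAbove
  · exact Set.mem_image_of_mem _ hy

lemma exists_modulus [CompactSpace X] (hf : ∀ n, Continuous (f n)) (n : ℕ) {r : ℝ} (hr : 0 < r) :
    ∃ η > 0, ∀ x y : X, dist x y < η → ∀ j < n, dist (nIter f j x) (nIter f j y) < r := by
  induction n with
  | zero => exact ⟨1, one_pos, fun x y _ j hj => absurd hj (Nat.not_lt_zero j)⟩
  | succ n ih =>
    obtain ⟨η₀, hη₀, h₀⟩ := ih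
    have hu : UniformContinuous (nIter f n) :=
      CompactSpace.uniformContinuous_of_continuous (nIter_continuous hf n)
    obtain ⟨η₁, hη₁, h₁⟩ := Metric.uniformContinuous_iff.mp hu r hr
    refine ⟨min η₀ η₁, lt_min hη₀ hη₁, fun x y hxy j hj => ?_⟩
    rcases Nat.lt_succ_iff_lt_or_eq.mp hj with h | h
    · exact h₀ x y (hxy.trans_le (min_le_left _ _)) j h
    · subst h; exact h₁ (hxy.trans_le (min_le_right _ _))

lemma separated_finite [CompactSpace X] (hf : ∀ n, Continuous (f n)) {n : ℕ} {ε : ℝ} (hε : 0 < ε)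
    {T : Set X}
    (hT : ∀ x ∈ T, ∀ y ∈ T, x ≠ y → ∃ j < n, 6 * ε ≤ dist (nIter f j x) (nIter f j y)) :
    T.Finite := by
  obtain ⟨η, hη, hmod⟩ := exists_modulus hf n (r := 3 * ε) (by linarith)
  obtain ⟨t, htfin, htcov⟩ := Metric.totallyBounded_iff.mp (isCompact_univ : IsCompact (Set.univ : Set X)).totallyBounded η hη
  have hsel : ∀ x : X, ∃ y, y ∈ t ∧ x ∈ Metric.ball y η := fun x => by
    simpa using htcov (Set.mem_univ x)
  choose g hg1 hg2 using hsel
  refine Set.Finite.of_finite_image (f := g) (htfin.subset ?_) ?_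
  · exact Set.image_subset_iff.mpr fun x _ => hg1 x
  · intro x hx y hy hxy
    by_contra hne
    obtain ⟨j, hj, hd⟩ := hT x hx y hy hne
    have d1 : dist (g x) x < η := by
      have := hg2 x; rwa [Metric.mem_ball, dist_comm] at this
    have d2 : dist (g x) y < η := by
      have := hg2 y; rw [Metric.mem_ball, dist_comm] at this; rwa [hxy]
    have e1 := hmod (g x) x d1 j hj
    have e2 := hmod (g x) y d2 j hj
    have e3 := dist_triangle_left (nIter f j x) (nIter f j y) (nIter f j (g x))
    linarith

lemma sum_inv_sq_aux (k : ℕ) :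
    ∑ n ∈ Finset.range (k + 3), (if 2 ≤ n then (((n : ℝ) ^ 2)⁻¹) else 0)
      ≤ 3 / 4 - ((k : ℝ) + 2)⁻¹ := by
  induction k with
  | zero => norm_num [Finset.sum_range_succ]
  | succ k ih =>
    rw [Finset.sum_range_succ, if_pos (by omega : 2 ≤ k + 3)]
    have hk : (0 : ℝ) < (k : ℝ) + 2 := by positivity
    have hk3 : (0 : ℝ) < (k : ℝ) + 3 := by positivity
    have hc : ((k + 3 : ℕ) : ℝ) = (k : ℝ) + 3 := by push_cast; ring
    have e1 : ((k : ℝ) + 2)⁻¹ - ((k : ℝ) + 3)⁻¹ = (((k : ℝ) + 2) * ((k : ℝ) + 3))⁻¹ := by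
      field_simp
      ring
    have e2 : ((((k : ℝ) + 3)) ^ 2)⁻¹ ≤ (((k : ℝ) + 2) * ((k : ℝ) + 3))⁻¹ := by
      apply inv_anti₀ (by positivity)
      nlinarith
    have hcast : (((k + 1 : ℕ) : ℝ) + 2) = (k : ℝ) + 3 := by push_cast; ring
    rw [hc, hcast]
    linarith

lemma sum_inv_sq_le (M : ℕ) :
    ∑ n ∈ Finset.range M, (if 2 ≤ n then (((n : ℝ) ^ 2)⁻¹) else 0) ≤ 3 / 4 := by
  rcases Nat.lt_or_ge M 3 with h | h
  · calc ∑ n ∈ Finset.range M, (if 2 ≤ n then (((n : ℝ) ^ 2)⁻¹) else 0)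
        ≤ ∑ n ∈ Finset.range 3, (if 2 ≤ n then (((n : ℝ) ^ 2)⁻¹) else 0) := by
          apply Finset.sum_le_sum_of_subset_of_nonneg
          · exact Finset.range_subset_range.mpr (by omega)
          · intro i _ _; positivity
      _ ≤ 3 / 4 := by norm_num [Finset.sum_range_succ]
  · obtain ⟨k, rfl⟩ := Nat.exists_eq_add_of_le h
    have := sum_inv_sq_aux k
    have hpos : (0 : ℝ) < (k : ℝ) + 2 := by positivity
    have hinv : (0 : ℝ) ≤ ((k : ℝ) + 2)⁻¹ := by positivity
    calc ∑ n ∈ Finset.range (3 + k), (if 2 ≤ n then (((n : ℝ) ^ 2)⁻¹) else 0)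
        = ∑ n ∈ Finset.range (k + 3), (if 2 ≤ n then (((n : ℝ) ^ 2)⁻¹) else 0) := by
          rw [Nat.add_comm]
      _ ≤ 3 / 4 - ((k : ℝ) + 2)⁻¹ := sum_inv_sq_aux k
      _ ≤ 3 / 4 := by linarith

lemma tsum_tail_le :
    (∑' n : ℕ, if 2 ≤ n then ENNReal.ofReal (((n : ℝ) ^ 2)⁻¹) else 0)
      ≤ ENNReal.ofReal (3 / 4) := by
  rw [ENNReal.tsum_eq_iSup_sum]
  refine iSup_le fun s => ?_
  obtain ⟨M, hM⟩ := s.exists_nat_subset_range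
  calc ∑ n ∈ s, (if 2 ≤ n then ENNReal.ofReal (((n : ℝ) ^ 2)⁻¹) else 0)
      ≤ ∑ n ∈ Finset.range M, (if 2 ≤ n then ENNReal.ofReal (((n : ℝ) ^ 2)⁻¹) else 0) :=
        Finset.sum_le_sum_of_subset hM
    _ = ENNReal.ofReal (∑ n ∈ Finset.range M, (if 2 ≤ n then (((n : ℝ) ^ 2)⁻¹) else 0)) := by
        rw [ENNReal.ofReal_sum_of_nonneg (fun n _ => by positivity)]
        exact Finset.sum_congr rfl fun n _ => by split <;> simp
    _ ≤ ENNReal.ofReal (3 / 4) := ENNReal.ofReal_le_ofReal (sum_inv_sq_le M)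

open Classical in
/-- The "level `n`" weight function at a point `z`. -/
def lvlFn (f : ℕ → X → X) (cx : ℕ → X) (m : ℕ → ℕ) (c : ℕ → ℝ) (u : Set ℕ) (ε : ℝ)
    (n : ℕ) (z : X) : ℝ≥0∞ :=
  ∑' i : ℕ, if i ∈ u ∧ m i = n then
    (bowenBall f n (cx i) ε).indicator (fun _ => ENNReal.ofReal (c i)) z else 0

end AuxS15

/-- If `N ≥ 2` is such that `n² e^{−nδ} ≤ 1` for all `n ≥ N`, then
`𝓜(N, α+δ, 6ε, Z, ψ) ≤ W(N, α, ε, Z, ψ)`. -/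
theorem statement15 [CompactSpace X]
    (f : ℕ → X → X) (hf : ∀ n, Continuous (f n)) (ψ : X → ℝ) (hψ : Continuous ψ)
    (Z : Set X) (ε δ α : ℝ) (hε : 0 < ε) (hδ : 0 < δ) (N : ℕ) (hN2 : 2 ≤ N)
    (hN : ∀ n : ℕ, N ≤ n → (n : ℝ) ^ 2 * Real.exp (-(n : ℝ) * δ) ≤ 1) :
    MpreC f ψ Z N (α + δ) (6 * ε) ≤ Wpre f ψ Z N α ε := by
  classical
  refine le_sInf fun b hb => ?_
  obtain ⟨u, cx, m, c, hcpos, hmN, hcovW, rfl⟩ := hb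
  set w : ℕ → ℝ≥0∞ := fun i => ENNReal.ofReal (c i) *
    ENNReal.ofReal (Real.exp (-α * (m i : ℝ) + birkSupBall f ψ (m i) (cx i) ε)) with hw
  -- Claim A : every point of Z has a "good level" n
  have claimA : ∀ z ∈ Z, ∃ n, N ≤ n ∧
      ENNReal.ofReal (((n : ℝ) ^ 2)⁻¹) < lvlFn f cx m c u ε n z := by
    intro z hz
    by_contra hcon
    push_neg at hcon
    have h1 : (1 : ℝ≥0∞) ≤ ∑' i : ℕ, u.indicator
        (fun i => (bowenBall f (m i) (cx i) ε).indicator (fun _ => ENNReal.ofReal (c i)) z) i := by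
      rw [← tsum_subtype]
      exact hcovW z hz
    have h2 : ∀ i : ℕ, u.indicator
        (fun i => (bowenBall f (m i) (cx i) ε).indicator (fun _ => ENNReal.ofReal (c i)) z) i
        = ∑' n : ℕ, if i ∈ u ∧ m i = n then
            (bowenBall f n (cx i) ε).indicator (fun _ => ENNReal.ofReal (c i)) z else 0 := by
      intro i
      rw [tsum_eq_single (m i) (fun n hn => if_neg (fun h => hn h.2.symm))]
      by_cases hi : i ∈ u
      · rw [Set.indicator_of_mem hi, if_pos ⟨hi, rfl⟩]
      · rw [Set.indicator_of_notMem hi, if_neg (fun h => hi h.1)]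
    have h3 : (1 : ℝ≥0∞) ≤ ENNReal.ofReal (3 / 4) := by
      calc (1 : ℝ≥0∞) ≤ _ := h1
        _ = ∑' i : ℕ, ∑' n : ℕ, (if i ∈ u ∧ m i = n then
              (bowenBall f n (cx i) ε).indicator (fun _ => ENNReal.ofReal (c i)) z else 0) :=
            tsum_congr h2
        _ = ∑' n : ℕ, lvlFn f cx m c u ε n z := ENNReal.tsum_comm
        _ ≤ ∑' n : ℕ, (if 2 ≤ n then ENNReal.ofReal (((n : ℝ) ^ 2)⁻¹) else 0) := by
            refine ENNReal.tsum_le_tsum fun n => ?_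
            rcases Nat.lt_or_ge n N with hn | hn
            · have : lvlFn f cx m c u ε n z = 0 := by
                refine ENNReal.tsum_eq_zero.mpr fun i => if_neg fun h => ?_
                have := hmN i h.1
                omega
              rw [this]
              exact zero_le
            · rw [if_pos (le_trans hN2 hn)]
              exact hcon n hn
        _ ≤ ENNReal.ofReal (3 / 4) := tsum_tail_le
    have : ENNReal.ofReal (3 / 4) < 1 := ENNReal.ofReal_lt_one.mpr (by norm_num)
    exact absurd h3 (not_le.mpr this)
  -- the "good" sets at level n
  set Zn : ℕ → Set X := fun n =>
    {z | z ∈ Z ∧ ENNReal.ofReal (((n : ℝ) ^ 2)⁻¹) < lvlFn f cx m c u ε n z} with hZn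
  -- maximal (6ε)-separated subsets of Zn n
  have hTex : ∀ n : ℕ, ∃ T : Set X, (T ⊆ Zn n ∧ ∀ x ∈ T, ∀ y ∈ T, x ≠ y →
      ∃ j < n, 6 * ε ≤ dist (nIter f j x) (nIter f j y)) ∧
      ∀ T' : Set X, (T' ⊆ Zn n ∧ ∀ x ∈ T', ∀ y ∈ T', x ≠ y →
        ∃ j < n, 6 * ε ≤ dist (nIter f j x) (nIter f j y)) → T ⊆ T' → T' = T := by
    intro n
    have hchain : ∀ ch ⊆ {T : Set X | T ⊆ Zn n ∧ ∀ x ∈ T, ∀ y ∈ T, x ≠ y →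
        ∃ j < n, 6 * ε ≤ dist (nIter f j x) (nIter f j y)}, IsChain (· ⊆ ·) ch →
        ∃ ub ∈ {T : Set X | T ⊆ Zn n ∧ ∀ x ∈ T, ∀ y ∈ T, x ≠ y →
          ∃ j < n, 6 * ε ≤ dist (nIter f j x) (nIter f j y)}, ∀ s ∈ ch, s ⊆ ub := by
      intro ch hchS hch
      refine ⟨⋃₀ ch, ⟨?_, ?_⟩, fun s hs => Set.subset_sUnion_of_mem hs⟩
      · exact Set.sUnion_subset fun s hs => (hchS hs).1
      · rintro x hx y hy hne
        obtain ⟨s, hs, hxs⟩ := hx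
        obtain ⟨s', hs', hys⟩ := hy
        rcases hch.total hs hs' with h | h
        · exact (hchS hs').2 x (h hxs) y hys hne
        · exact (hchS hs).2 x hxs y (h hys) hne
    obtain ⟨T, hT⟩ := zorn_subset _ hchain
    exact ⟨T, hT.1, fun T' hT' hsub => Set.Subset.antisymm (hT.2 hT' hsub) hsub⟩
  choose T hTsep hTmax using hTex
  -- maximal separated sets are (6ε)-spanning
  have hTcov : ∀ n, ∀ z ∈ Zn n, ∃ y ∈ T n, z ∈ bowenBall f n y (6 * ε) := by
    intro n z hz
    by_contra hcon
    push_neg at hcon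
    have hself : z ∈ bowenBall f n z (6 * ε) := fun j _ => by
      rw [dist_self]; positivity
    have hzT : z ∉ T n := fun hzT => hcon z hzT hself
    have hsep' : ∀ y ∈ T n, ∃ j < n, 6 * ε ≤ dist (nIter f j y) (nIter f j z) := by
      intro y hy
      have h := hcon y hy
      simp only [bowenBall, Set.mem_setOf_eq, not_forall, not_lt, exists_prop] at h
      exact h
    have hmem : T n ∪ {z} ⊆ Zn n ∧ ∀ x ∈ T n ∪ {z}, ∀ y ∈ T n ∪ {z}, x ≠ y →
        ∃ j < n, 6 * ε ≤ dist (nIter f j x) (nIter f j y) := by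
      constructor
      · exact Set.union_subset (hTsep n).1 (Set.singleton_subset_iff.mpr hz)
      · rintro x (hx | hx) y (hy | hy) hne
        · exact (hTsep n).2 x hx y hy hne
        · rw [Set.mem_singleton_iff] at hy; subst hy
          exact hsep' x hx
        · rw [Set.mem_singleton_iff] at hx; subst hx
          obtain ⟨j, hj, hd⟩ := hsep' y hy
          exact ⟨j, hj, by rwa [dist_comm] at hd⟩
        · rw [Set.mem_singleton_iff] at hx hy
          exact absurd (hx.trans hy.symm) hne
    have := hTmax n (T n ∪ {z}) hmem Set.subset_union_left
    exact hzT (this ▸ Set.mem_union_right _ (Set.mem_singleton z))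
  have hTfin : ∀ n, (T n).Finite := fun n => separated_finite hf hε (hTsep n).2
  -- the (countable) index set of the constructed cover
  set P : Set (ℕ × X) := {p | N ≤ p.1 ∧ p.2 ∈ T p.1} with hP
  have hPc : P.Countable := by
    have hsub : P ⊆ ⋃ n : ℕ, (({n} : Set ℕ) ×ˢ T n) := by
      rintro ⟨n, y⟩ ⟨-, hy⟩
      exact Set.mem_iUnion.mpr ⟨n, Set.mk_mem_prod rfl hy⟩
    exact Set.Countable.mono hsub
      (Set.countable_iUnion fun n => ((Set.finite_singleton n).prod (hTfin n)).countable)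
  rcases Z.eq_empty_or_nonempty with hZ | hZ
  · exact sInf_le_of_le
      ⟨∅, cx, fun _ => N, fun i hi => absurd hi (Set.notMem_empty i), by simp [hZ], rfl⟩
      (by simp)
  obtain ⟨z₀, hz₀⟩ := hZ
  obtain ⟨n₀, hn₀, hlt₀⟩ := claimA z₀ hz₀
  obtain ⟨y₀, hy₀, -⟩ := hTcov n₀ z₀ ⟨hz₀, hlt₀⟩
  have hPne : P.Nonempty := ⟨(n₀, y₀), hn₀, hy₀⟩
  obtain ⟨e, he⟩ := hPc.exists_eq_range hPne
  have heP : ∀ k, e k ∈ P := fun k => by rw [he]; exact Set.mem_range_self k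
  set u' : Set ℕ := {k | ∀ k' < k, e k' ≠ e k} with hu'
  have hinj : ∀ k ∈ u', ∀ k' ∈ u', e k = e k' → k = k' := by
    intro k hk k' hk' hekk
    rcases lt_trichotomy k k' with h | h | h
    · exact absurd hekk (hk' k h)
    · exact h
    · exact absurd hekk.symm (hk k' h)
  have hsurj : ∀ p ∈ P, ∃ k ∈ u', e k = p := by
    intro p hp
    rw [he] at hp
    have hex : ∃ k, e k = p := hp
    refine ⟨Nat.find hex, fun k' hk' => ?_, Nat.find_spec hex⟩
    rw [Nat.find_spec hex]
    exact Nat.find_min hex hk'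
  -- the per-pair index families
  set I : ℕ × X → Set ℕ := fun p =>
    {i | i ∈ u ∧ m i = p.1 ∧ p.2 ∈ bowenBall f p.1 (cx i) ε} with hI
  have claimB : ∀ p ∈ P, ∀ q ∈ P, p ≠ q → ∀ i, i ∈ I p → i ∈ I q → False := by
    intro p hp q hq hne i hip hiq
    obtain ⟨hiu, hmp, hbp⟩ := hip
    obtain ⟨-, hmq, hbq⟩ := hiq
    have h1 : p.1 = q.1 := hmp ▸ hmq
    have h2 : p.2 ≠ q.2 := fun h => hne (Prod.ext h1 h)
    have hyT : p.2 ∈ T p.1 := hp.2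
    have hyT' : q.2 ∈ T p.1 := by rw [h1]; exact hq.2
    obtain ⟨j, hj, hd⟩ := (hTsep p.1).2 p.2 hyT q.2 hyT' h2
    have e1 : dist (nIter f j (cx i)) (nIter f j p.2) < ε := hbp j hj
    have e2 : dist (nIter f j (cx i)) (nIter f j q.2) < ε := hbq j (h1 ▸ hj)
    have e3 := dist_triangle_left (nIter f j p.2) (nIter f j q.2) (nIter f j (cx i))
    linarith
  -- Claim (a) : the per-pair bound
  have claimAa : ∀ p ∈ P,
      ENNReal.ofReal (Real.exp (-(α + δ) * (p.1 : ℝ) + birkSum f ψ p.1 p.2))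
        ≤ ∑' i : ℕ, (if i ∈ I p then w i else 0) := by
    intro p hp
    obtain ⟨hN1, hyT⟩ := hp
    have hyZn : p.2 ∈ Zn p.1 := (hTsep p.1).1 hyT
    set E : ℝ≥0∞ := ENNReal.ofReal (Real.exp (-α * (p.1 : ℝ) + birkSum f ψ p.1 p.2)) with hE
    have step1 : ∀ i : ℕ, (if i ∈ I p then ENNReal.ofReal (c i) else 0) * E
        ≤ (if i ∈ I p then w i else 0) := by
      intro i
      by_cases hi : i ∈ I p
      · rw [if_pos hi, if_pos hi, hw]
        obtain ⟨hiu, hmi, hball⟩ := hi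
        simp only
        rw [hmi]
        exact mul_le_mul_right (ENNReal.ofReal_le_ofReal (Real.exp_le_exp.mpr
          (by linarith [birkSum_le_birkSupBall (f := f) (ψ := ψ) hf hψ hball]))) _
      · simp [hi]
    have step2 : lvlFn f cx m c u ε p.1 p.2
        = ∑' i : ℕ, (if i ∈ I p then ENNReal.ofReal (c i) else 0) := by
      simp only [lvlFn]
      refine tsum_congr fun i => ?_
      by_cases hi : i ∈ I p
      · obtain ⟨hiu, hmi, hball⟩ := hi
        rw [if_pos ⟨hiu, hmi⟩, Set.indicator_of_mem hball, if_pos ⟨hiu, hmi, hball⟩]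
      · rw [if_neg hi]
        by_cases h2 : i ∈ u ∧ m i = p.1
        · rw [if_pos h2, Set.indicator_of_notMem (fun hb => hi ⟨h2.1, h2.2, hb⟩)]
        · rw [if_neg h2]
    have hn0 : 0 < p.1 := lt_of_lt_of_le (by norm_num) (le_trans hN2 hN1)
    have hnR : (0 : ℝ) < (p.1 : ℝ) := Nat.cast_pos.mpr hn0
    have hpos : (0 : ℝ) < ((p.1 : ℝ)) ^ 2 := pow_pos hnR 2
    have hlb : ENNReal.ofReal (Real.exp (-δ * (p.1 : ℝ)))
        ≤ ∑' i : ℕ, (if i ∈ I p then ENNReal.ofReal (c i) else 0) := by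
      rw [← step2]
      refine le_trans ?_ (le_of_lt hyZn.2)
      refine ENNReal.ofReal_le_ofReal ?_
      have hh := hN p.1 hN1
      rw [inv_eq_one_div, le_div_iff₀ hpos]
      have harg : -δ * (p.1 : ℝ) = -(p.1 : ℝ) * δ := by ring
      rw [harg, mul_comm]
      exact hh
    calc ENNReal.ofReal (Real.exp (-(α + δ) * (p.1 : ℝ) + birkSum f ψ p.1 p.2))
        = ENNReal.ofReal (Real.exp (-δ * (p.1 : ℝ))) * E := by
          rw [hE, ← ENNReal.ofReal_mul (Real.exp_nonneg _), ← Real.exp_add]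
          congr 2
          ring
      _ ≤ (∑' i : ℕ, (if i ∈ I p then ENNReal.ofReal (c i) else 0)) * E :=
          mul_le_mul_left hlb _
      _ = ∑' i : ℕ, (if i ∈ I p then ENNReal.ofReal (c i) else 0) * E :=
          (ENNReal.tsum_mul_right).symm
      _ ≤ ∑' i : ℕ, (if i ∈ I p then w i else 0) := ENNReal.tsum_le_tsum step1
  -- main estimate
  have key : (∑' k : ↥u', ENNReal.ofReal (Real.exp (-(α + δ) * (((e (k : ℕ)).1 : ℕ) : ℝ)
        + birkSum f ψ (e (k : ℕ)).1 (e (k : ℕ)).2))) ≤ ∑' i : ↥u, w ↑i := by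
    calc (∑' k : ↥u', ENNReal.ofReal (Real.exp (-(α + δ) * (((e (k : ℕ)).1 : ℕ) : ℝ)
          + birkSum f ψ (e (k : ℕ)).1 (e (k : ℕ)).2)))
        = ∑' k : ℕ, Set.indicator u' (fun k => ENNReal.ofReal (Real.exp (-(α + δ)
            * (((e k).1 : ℕ) : ℝ) + birkSum f ψ (e k).1 (e k).2))) k :=
          tsum_subtype u' (fun k => ENNReal.ofReal (Real.exp (-(α + δ)
            * (((e k).1 : ℕ) : ℝ) + birkSum f ψ (e k).1 (e k).2)))
      _ ≤ ∑' k : ℕ, ∑' i : ℕ, (if k ∈ u' then (if i ∈ I (e k) then w i else 0) else 0) := by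
          refine ENNReal.tsum_le_tsum fun k => ?_
          by_cases hk : k ∈ u'
          · rw [Set.indicator_of_mem hk]
            simp only [if_pos hk]
            exact claimAa (e k) (heP k)
          · simp [Set.indicator_of_notMem hk, hk]
      _ = ∑' i : ℕ, ∑' k : ℕ, (if k ∈ u' then (if i ∈ I (e k) then w i else 0) else 0) :=
          ENNReal.tsum_comm
      _ ≤ ∑' i : ℕ, Set.indicator u w i := by
          refine ENNReal.tsum_le_tsum fun i => ?_
          by_cases hex : ∃ k, k ∈ u' ∧ i ∈ I (e k)
          · obtain ⟨k₀, hk₀, hik₀⟩ := hex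
            have hiu : i ∈ u := hik₀.1
            have hle : ∀ k : ℕ, (if k ∈ u' then (if i ∈ I (e k) then w i else 0) else 0)
                ≤ (if k = k₀ then w i else 0) := by
              intro k
              by_cases hk : k ∈ u'
              · by_cases hik : i ∈ I (e k)
                · have hkk : k = k₀ := by
                    by_contra hne
                    have hpq : e k ≠ e k₀ := fun hcc => hne (hinj k hk k₀ hk₀ hcc)
                    exact claimB (e k) (heP k) (e k₀) (heP k₀) hpq i hik hik₀
                  rw [if_pos hk, if_pos hik, hkk, if_pos rfl]
                · simp [hik]
              · simp [hk]
            calc ∑' k : ℕ, (if k ∈ u' then (if i ∈ I (e k) then w i else 0) else 0)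
                ≤ ∑' k : ℕ, (if k = k₀ then w i else 0) := ENNReal.tsum_le_tsum hle
              _ = w i := tsum_ite_eq k₀ (fun _ => w i)
              _ = Set.indicator u w i := (Set.indicator_of_mem hiu w).symm
          · push_neg at hex
            have hz : ∀ k : ℕ, (if k ∈ u' then (if i ∈ I (e k) then w i else 0) else 0) = 0 := by
              intro k
              by_cases hk : k ∈ u' <;> simp [hk, hex k]
            rw [tsum_congr hz]
            simp
      _ = ∑' i : ↥u, w ↑i := (tsum_subtype u w).symm
  refine le_trans (sInf_le ?_) key
  refine ⟨u', fun k => (e k).2, fun k => (e k).1, fun i _ => (heP i).1, ?_, rfl⟩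
  intro z hz
  obtain ⟨n, hn, hlt⟩ := claimA z hz
  obtain ⟨y, hy, hball⟩ := hTcov n z ⟨hz, hlt⟩
  have hpP : (n, y) ∈ P := ⟨hn, hy⟩
  obtain ⟨k, hku, hek⟩ := hsurj (n, y) hpP
  refine Set.mem_biUnion hku ?_
  show z ∈ bowenBall f (e k).1 (e k).2 (6 * ε)
  rw [hek]
  exact hball

end
end

section
/- Let (X,d) be a compact metric space, f_{1,∞} an NDS on X, Z a nonempty compact subset of X, ψ ∈ C(X,ℝ), α ∈ ℝ, N ∈ ℕ, and ε > 0. Suppose c := W(N,α,ε,Z,ψ) > 0. Then there exists a Borel probability measure μ on X such that μ(Z) = 1 and μ(B_n(x,ε)) ≤ (1/c) exp(−α n + S_{1,n}ψ(x,ε)) for all x ∈ X and all n ≥ N. -/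
open Filter MeasureTheory Set ENNReal

noncomputable section

variable {X : Type} [MetricSpace X]

variable [MeasurableSpace X]

section FrostmanAux

lemma continuous_nIter (f : ℕ → X → X) (hf : ∀ n, Continuous (f n)) :
    ∀ n, Continuous (nIter f n)
  | 0 => continuous_id
  | (n + 1) => (hf n).comp (continuous_nIter f hf n)

lemma isOpen_bowenBall (f : ℕ → X → X) (hf : ∀ n, Continuous (f n)) (n : ℕ) (x : X) (ε : ℝ) :
    IsOpen (bowenBall f n x ε) := by
  have h : bowenBall f n x ε
      = ⋂ j ∈ Finset.range n, {y | dist (nIter f j x) (nIter f j y) < ε} := by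
    ext y; simp [bowenBall, Finset.mem_range]
  rw [h]
  exact isOpen_biInter_finset fun j _ =>
    isOpen_lt (Continuous.dist continuous_const (continuous_nIter f hf j)) continuous_const

lemma mem_bowenBall_self (f : ℕ → X → X) {ε : ℝ} (hε : 0 < ε) (n : ℕ) (x : X) :
    x ∈ bowenBall f n x ε := fun j _ => by simpa using hε

/-- The set of values of weighted covers dominating `g` on `Z`. -/
def PFset (f : ℕ → X → X) (ψ : X → ℝ) (Z : Set X) (N : ℕ) (α ε : ℝ) (g : X → ℝ) :
    Set ℝ≥0∞ :=
  { S : ℝ≥0∞ | ∃ (u : Set ℕ) (cx : ℕ → X) (m : ℕ → ℕ) (c : ℕ → ℝ),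
    (∀ i ∈ u, 0 < c i) ∧ (∀ i ∈ u, N ≤ m i) ∧
    (∀ z ∈ Z, ENNReal.ofReal (g z) ≤ ∑' i : u,
      (bowenBall f (m i) (cx i) ε).indicator (fun _ => ENNReal.ofReal (c i)) z) ∧
    S = ∑' i : u, ENNReal.ofReal (c i) *
      ENNReal.ofReal (Real.exp (-α * (m i : ℝ) + birkSupBall f ψ (m i) (cx i) ε)) }

/-- The Frostman functional. -/
def PF (f : ℕ → X → X) (ψ : X → ℝ) (Z : Set X) (N : ℕ) (α ε : ℝ) (g : X → ℝ) : ℝ≥0∞ :=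
  sInf (PFset f ψ Z N α ε g)

lemma PF_one (f : ℕ → X → X) (ψ : X → ℝ) (Z : Set X) (N : ℕ) (α ε : ℝ) :
    PF f ψ Z N α ε (fun _ => 1) = Wpre f ψ Z N α ε := by
  simp only [PF, PFset, Wpre, ENNReal.ofReal_one]

lemma PF_of_nonpos [Nonempty X] (f : ℕ → X → X) (ψ : X → ℝ) (Z : Set X) (N : ℕ) (α ε : ℝ)
    {g : X → ℝ} (hg : ∀ z ∈ Z, g z ≤ 0) : PF f ψ Z N α ε g = 0 := by
  refine le_antisymm (sInf_le ?_) zero_le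
  refine ⟨∅, fun _ => Classical.arbitrary X, fun _ => N, fun _ => 1, by simp, by simp, ?_, ?_⟩
  · intro z hz
    rw [tsum_empty, ENNReal.ofReal_of_nonpos (hg z hz)]
  · rw [tsum_empty]

lemma PF_mono (f : ℕ → X → X) (ψ : X → ℝ) (Z : Set X) (N : ℕ) (α ε : ℝ)
    {g h : X → ℝ} (hgh : ∀ z ∈ Z, g z ≤ h z) : PF f ψ Z N α ε g ≤ PF f ψ Z N α ε h := by
  refine sInf_le_sInf ?_
  rintro S ⟨u, cx, m, c, h1, h2, h3, h4⟩
  exact ⟨u, cx, m, c, h1, h2, fun z hz =>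
    le_trans (ENNReal.ofReal_le_ofReal (hgh z hz)) (h3 z hz), h4⟩

lemma PF_single (f : ℕ → X → X) (ψ : X → ℝ) (Z : Set X) (N : ℕ) (α ε : ℝ)
    {g : X → ℝ} (x : X) {n : ℕ} (hn : N ≤ n) (hg1 : ∀ z, g z ≤ 1)
    (hg0 : ∀ z ∈ Z, z ∉ bowenBall f n x ε → g z ≤ 0) :
    PF f ψ Z N α ε g ≤ ENNReal.ofReal (Real.exp (-α * (n : ℝ) + birkSupBall f ψ n x ε)) := by
  refine sInf_le_of_le (b := ENNReal.ofReal 1 *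
      ENNReal.ofReal (Real.exp (-α * (n : ℝ) + birkSupBall f ψ n x ε))) ?_ (by simp)
  refine ⟨{0}, fun _ => x, fun _ => n, fun _ => 1, by simp, by simpa using hn, ?_, ?_⟩
  · intro z hz
    rw [tsum_singleton 0 (fun _ =>
      (bowenBall f n x ε).indicator (fun _ => ENNReal.ofReal (1 : ℝ)) z)]
    by_cases hzb : z ∈ bowenBall f n x ε
    · rw [Set.indicator_of_mem hzb]
      exact ENNReal.ofReal_le_ofReal (hg1 z)
    · rw [Set.indicator_of_notMem hzb, ENNReal.ofReal_of_nonpos (hg0 z hz hzb)]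
  · rw [tsum_singleton 0 (fun _ => ENNReal.ofReal (1 : ℝ) *
      ENNReal.ofReal (Real.exp (-α * (n : ℝ) + birkSupBall f ψ n x ε)))]

lemma PFset_finite [CompactSpace X] (f : ℕ → X → X) (hf : ∀ n, Continuous (f n))
    (ψ : X → ℝ) (Z : Set X) (N : ℕ) (α ε : ℝ) (hε : 0 < ε) (x₀ : X)
    {g : X → ℝ} {R : ℝ} (hgR : ∀ z, g z ≤ R) :
    ∃ S ∈ PFset f ψ Z N α ε g, S ≠ ∞ := by
  classical
  -- finite cover of Z (indeed of all of X) by Bowen balls of order N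
  obtain ⟨t, ht⟩ := IsCompact.elim_finite_subcover (isCompact_univ (X := X))
    (fun z : X => bowenBall f N z ε) (fun z => isOpen_bowenBall f hf N z ε)
    (fun z _ => Set.mem_iUnion.2 ⟨z, mem_bowenBall_self f hε N z⟩)
  set l := t.toList with hl
  set K : ℝ := max R 1 with hK
  refine ⟨∑' i : (↑(Finset.range l.length) : Set ℕ), ENNReal.ofReal K *
      ENNReal.ofReal (Real.exp (-α * ((N : ℕ) : ℝ) +
        birkSupBall f ψ N (l.getD i x₀) ε)), ?_, ?_⟩
  · refine ⟨(↑(Finset.range l.length) : Set ℕ), fun i => l.getD i x₀, fun _ => N,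
      fun _ => K, ?_, ?_, ?_, rfl⟩
    · intro i _; exact lt_of_lt_of_le one_pos (le_max_right R 1)
    · intro i _; exact le_rfl
    · intro z _
      have hz : z ∈ ⋃ y ∈ t, bowenBall f N y ε := ht (Set.mem_univ z)
      rw [Set.mem_iUnion₂] at hz
      obtain ⟨y, hyt, hzy⟩ := hz
      have hyl : y ∈ l := by rw [hl]; exact Finset.mem_toList.2 hyt
      obtain ⟨j, hj, rfl⟩ := List.getElem_of_mem hyl
      have hjm : j ∈ (↑(Finset.range l.length) : Set ℕ) := by
        simp [Finset.mem_range, hj]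
      calc ENNReal.ofReal (g z) ≤ ENNReal.ofReal K :=
            ENNReal.ofReal_le_ofReal (le_trans (hgR z) (le_max_left R 1))
        _ = (bowenBall f N (l.getD j x₀) ε).indicator
              (fun _ => ENNReal.ofReal K) z := by
            rw [Set.indicator_of_mem]
            rw [List.getD_eq_getElem l x₀ hj]
            exact hzy
        _ ≤ _ := ENNReal.le_tsum (⟨j, hjm⟩ : (↑(Finset.range l.length) : Set ℕ))
  · rw [tsum_fintype]
    exact (ENNReal.sum_lt_top.2 fun i _ => ENNReal.mul_lt_top ENNReal.ofReal_lt_top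
      ENNReal.ofReal_lt_top).ne

lemma PF_ne_top [CompactSpace X] (f : ℕ → X → X) (hf : ∀ n, Continuous (f n))
    (ψ : X → ℝ) (Z : Set X) (N : ℕ) (α ε : ℝ) (hε : 0 < ε) (x₀ : X)
    {g : X → ℝ} {R : ℝ} (hgR : ∀ z, g z ≤ R) :
    PF f ψ Z N α ε g ≠ ∞ := by
  obtain ⟨S, hS, hStop⟩ := PFset_finite f hf ψ Z N α ε hε x₀ hgR
  exact fun h => hStop (top_le_iff.1 (h ▸ sInf_le hS))

lemma PFset_smul_mem (f : ℕ → X → X) (ψ : X → ℝ) (Z : Set X) (N : ℕ) (α ε : ℝ)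
    {g : X → ℝ} {t : ℝ} (ht : 0 < t) {S : ℝ≥0∞} (hS : S ∈ PFset f ψ Z N α ε g) :
    ENNReal.ofReal t * S ∈ PFset f ψ Z N α ε (fun z => t * g z) := by
  obtain ⟨u, cx, m, c, h1, h2, h3, h4⟩ := hS
  refine ⟨u, cx, m, fun i => t * c i, fun i hi => mul_pos ht (h1 i hi), h2, ?_, ?_⟩
  · intro z hz
    have key : ∀ i : u, (bowenBall f (m i) (cx i) ε).indicator
        (fun _ => ENNReal.ofReal (t * c i)) z
        = ENNReal.ofReal t * (bowenBall f (m i) (cx i) ε).indicator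
          (fun _ => ENNReal.ofReal (c i)) z := by
      intro i
      by_cases hzb : z ∈ bowenBall f (m i) (cx i) ε
      · rw [Set.indicator_of_mem hzb, Set.indicator_of_mem hzb,
          ENNReal.ofReal_mul ht.le]
      · rw [Set.indicator_of_notMem hzb, Set.indicator_of_notMem hzb, mul_zero]
    rw [tsum_congr key, ENNReal.tsum_mul_left, ENNReal.ofReal_mul ht.le]
    exact mul_le_mul_right (h3 z hz) _
  · rw [h4, ← ENNReal.tsum_mul_left]
    exact tsum_congr fun i => by rw [ENNReal.ofReal_mul ht.le, mul_assoc]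

lemma PF_smul (f : ℕ → X → X) (ψ : X → ℝ) (Z : Set X) (N : ℕ) (α ε : ℝ)
    (g : X → ℝ) {t : ℝ} (ht : 0 < t) :
    PF f ψ Z N α ε (fun z => t * g z) = ENNReal.ofReal t * PF f ψ Z N α ε g := by
  have hle : ∀ (s : ℝ) (hs : 0 < s) (h : X → ℝ),
      PF f ψ Z N α ε (fun z => s * h z) ≤ ENNReal.ofReal s * PF f ψ Z N α ε h := by
    intro s hs h
    by_cases hA : (PFset f ψ Z N α ε h).Nonempty
    · have : Nonempty (PFset f ψ Z N α ε h) := hA.to_subtype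
      calc PF f ψ Z N α ε (fun z => s * h z)
          ≤ ⨅ S : ↑(PFset f ψ Z N α ε h), ENNReal.ofReal s * (S : ℝ≥0∞) :=
            le_iInf fun S => sInf_le (PFset_smul_mem f ψ Z N α ε hs S.2)
        _ = ENNReal.ofReal s * ⨅ S : ↑(PFset f ψ Z N α ε h), (S : ℝ≥0∞) :=
            (ENNReal.mul_iInf_of_ne (ENNReal.ofReal_pos.2 hs).ne'
              ENNReal.ofReal_ne_top).symm
        _ = ENNReal.ofReal s * PF f ψ Z N α ε h := by
            simp only [PF]; rw [sInf_eq_iInf']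
    · simp only [PF]
      rw [Set.not_nonempty_iff_eq_empty.1 hA, sInf_empty, ENNReal.mul_top
        (by simp [ENNReal.ofReal_eq_zero, not_le.2 hs])]
      exact le_top
  refine le_antisymm (hle t ht g) ?_
  have h2 := hle t⁻¹ (inv_pos.2 ht) (fun z => t * g z)
  have h3 : (fun z => t⁻¹ * (t * g z)) = g := by
    funext z; field_simp
  rw [h3] at h2
  calc ENNReal.ofReal t * PF f ψ Z N α ε g
      ≤ ENNReal.ofReal t * (ENNReal.ofReal t⁻¹ *
          PF f ψ Z N α ε (fun z => t * g z)) := mul_le_mul_right h2 _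
    _ = (ENNReal.ofReal t * ENNReal.ofReal t⁻¹) *
          PF f ψ Z N α ε (fun z => t * g z) := by rw [mul_assoc]
    _ = PF f ψ Z N α ε (fun z => t * g z) := by
        rw [← ENNReal.ofReal_mul ht.le, mul_inv_cancel₀ ht.ne', ENNReal.ofReal_one, one_mul]

lemma tsum_even_odd (u v : Set ℕ) (F : ℕ → ℝ≥0∞) :
    ∑' k : ↥((fun i => 2 * i) '' u ∪ (fun i => 2 * i + 1) '' v), F k
      = (∑' i : u, F (2 * i)) + ∑' j : v, F (2 * j + 1) := by
  have hinj1 : Set.InjOn (fun i : ℕ => 2 * i) u := fun a _ b _ h => by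
    simp only at h; omega
  have hinj2 : Set.InjOn (fun i : ℕ => 2 * i + 1) v := fun a _ b _ h => by
    simp only at h; omega
  have hd : Disjoint ((fun i : ℕ => 2 * i) '' u) ((fun i : ℕ => 2 * i + 1) '' v) := by
    rw [Set.disjoint_left]
    rintro k ⟨i, _, rfl⟩ ⟨j, _, hj⟩
    simp only at hj ⊢
    omega
  rw [Summable.tsum_union_disjoint hd ENNReal.summable ENNReal.summable,
    tsum_image F hinj1, tsum_image F hinj2]

lemma PF_add_le (f : ℕ → X → X) (ψ : X → ℝ) (Z : Set X) (N : ℕ) (α ε : ℝ)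
    (g h : X → ℝ) :
    PF f ψ Z N α ε (fun z => g z + h z) ≤ PF f ψ Z N α ε g + PF f ψ Z N α ε h := by
  classical
  have key : ∀ a ∈ PFset f ψ Z N α ε g, ∀ b ∈ PFset f ψ Z N α ε h,
      a + b ∈ PFset f ψ Z N α ε (fun z => g z + h z) := by
    rintro a ⟨u, cx, m, c, h1, h2, h3, h4⟩ b ⟨v, dx, mm, d, g1, g2, g3, g4⟩
    set CX : ℕ → X := fun k => if k % 2 = 0 then cx (k / 2) else dx (k / 2) with hCX
    set M : ℕ → ℕ := fun k => if k % 2 = 0 then m (k / 2) else mm (k / 2) with hM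
    set C : ℕ → ℝ := fun k => if k % 2 = 0 then c (k / 2) else d (k / 2) with hC
    have e1 : ∀ i : ℕ, CX (2 * i) = cx i ∧ M (2 * i) = m i ∧ C (2 * i) = c i := by
      intro i
      have h0 : (2 * i) % 2 = 0 := by omega
      have h1' : (2 * i) / 2 = i := by omega
      simp [hCX, hM, hC, h0, h1']
    have e2 : ∀ i : ℕ, CX (2 * i + 1) = dx i ∧ M (2 * i + 1) = mm i ∧ C (2 * i + 1) = d i := by
      intro i
      have h0 : (2 * i + 1) % 2 = 1 := by omega
      have h1' : (2 * i + 1) / 2 = i := by omega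
      simp [hCX, hM, hC, h0, h1']
    refine ⟨(fun i => 2 * i) '' u ∪ (fun i => 2 * i + 1) '' v, CX, M, C, ?_, ?_, ?_, ?_⟩
    · rintro k (⟨i, hi, rfl⟩ | ⟨j, hj, rfl⟩)
      · rw [(e1 i).2.2]; exact h1 i hi
      · rw [(e2 j).2.2]; exact g1 j hj
    · rintro k (⟨i, hi, rfl⟩ | ⟨j, hj, rfl⟩)
      · rw [(e1 i).2.1]; exact h2 i hi
      · rw [(e2 j).2.1]; exact g2 j hj
    · intro z hz
      rw [tsum_even_odd u v (fun k =>
        (bowenBall f (M k) (CX k) ε).indicator (fun _ => ENNReal.ofReal (C k)) z)]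
      calc ENNReal.ofReal (g z + h z)
          ≤ ENNReal.ofReal (g z) + ENNReal.ofReal (h z) := ENNReal.ofReal_add_le
        _ ≤ _ := by
            refine add_le_add (le_trans (h3 z hz) (le_of_eq ?_))
              (le_trans (g3 z hz) (le_of_eq ?_))
            · exact tsum_congr fun i => by
                rw [(e1 i).1, (e1 i).2.1, (e1 i).2.2]
            · exact tsum_congr fun j => by
                rw [(e2 j).1, (e2 j).2.1, (e2 j).2.2]
    · rw [tsum_even_odd u v (fun k => ENNReal.ofReal (C k) *
        ENNReal.ofReal (Real.exp (-α * (M k : ℝ) + birkSupBall f ψ (M k) (CX k) ε)))]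
      rw [h4, g4]
      congr 1
      · exact tsum_congr fun i => by rw [(e1 i).1, (e1 i).2.1, (e1 i).2.2]
      · exact tsum_congr fun j => by rw [(e2 j).1, (e2 j).2.1, (e2 j).2.2]
  by_cases hA : (PFset f ψ Z N α ε g).Nonempty
  · by_cases hB : (PFset f ψ Z N α ε h).Nonempty
    · simp only [PF]
      rw [ENNReal.sInf_add]
      refine le_iInf₂ fun a ha => ?_
      rw [add_comm a, ENNReal.sInf_add]
      exact le_iInf₂ fun b hb =>
        (sInf_le (key a ha b hb)).trans (add_comm a b).le
    · simp only [PF]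
      rw [Set.not_nonempty_iff_eq_empty.1 hB, sInf_empty, add_top]
      exact le_top
  · simp only [PF]
    rw [Set.not_nonempty_iff_eq_empty.1 hA, sInf_empty, top_add]
    exact le_top

end FrostmanAux

/-- Dynamical Frostman lemma: if `c := W(N,α,ε,Z,ψ) > 0` for a nonempty
compact `Z`, then there is a Borel probability measure `μ` with `μ(Z) = 1` and
`μ(B_n(x,ε)) ≤ c⁻¹ exp(−αn + S_{1,n}ψ(x,ε))` for all `x ∈ X` and `n ≥ N`. -/
theorem statement17 [CompactSpace X] [BorelSpace X]
    (f : ℕ → X → X) (hf : ∀ n, Continuous (f n)) (ψ : X → ℝ) (hψ : Continuous ψ)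
    (Z : Set X) (hZne : Z.Nonempty) (hZ : IsCompact Z)
    (α : ℝ) (N : ℕ) (ε : ℝ) (hε : 0 < ε) (hc : 0 < Wpre f ψ Z N α ε) :
    ∃ μ : Measure X, IsProbabilityMeasure μ ∧ μ Z = 1 ∧
      ∀ (x : X) (n : ℕ), N ≤ n →
        μ (bowenBall f n x ε) ≤ (Wpre f ψ Z N α ε)⁻¹ *
          ENNReal.ofReal (Real.exp (-α * (n : ℝ) + birkSupBall f ψ n x ε)) := by
  classical
  have hXne : Nonempty X := ⟨hZne.some⟩
  set W := Wpre f ψ Z N α ε with hWdef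
  have hW0 : W ≠ 0 := hc.ne'
  have hPF1 : PF f ψ Z N α ε (fun _ => 1) = W := PF_one f ψ Z N α ε
  have hWtop : W ≠ ∞ := by
    rw [← hPF1]
    exact PF_ne_top f hf ψ Z N α ε hε hZne.some (R := 1) fun _ => le_rfl
  -- the sublinear functional `q`
  set q : C(X, ℝ) → ℝ := fun g => (W⁻¹ * PF f ψ Z N α ε g).toReal with hq
  have hPFfin : ∀ g : C(X, ℝ), PF f ψ Z N α ε ⇑g ≠ ∞ := by
    intro g
    obtain ⟨R, hR⟩ := (isCompact_range g.continuous).bddAbove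
    exact PF_ne_top f hf ψ Z N α ε hε hZne.some (R := R)
      fun z => hR (Set.mem_range_self z)
  have hqfin : ∀ g : C(X, ℝ), W⁻¹ * PF f ψ Z N α ε ⇑g ≠ ∞ :=
    fun g => ENNReal.mul_ne_top (ENNReal.inv_ne_top.2 hW0) (hPFfin g)
  have hq_nonneg : ∀ g : C(X, ℝ), 0 ≤ q g := fun g => ENNReal.toReal_nonneg
  have hq_one : q 1 = 1 := by
    have h1 : ⇑(1 : C(X, ℝ)) = fun _ : X => (1 : ℝ) := rfl
    simp only [hq, h1, hPF1, ENNReal.inv_mul_cancel hW0 hWtop, ENNReal.toReal_one]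
  have hq_smul : ∀ (t : ℝ), 0 < t → ∀ g : C(X, ℝ), q (t • g) = t * q g := by
    intro t ht g
    have hcoe : ⇑(t • g) = fun z => t * g z := by
      funext z; simp
    simp only [hq, hcoe, PF_smul f ψ Z N α ε (⇑g) ht]
    rw [mul_left_comm, ENNReal.toReal_mul, ENNReal.toReal_ofReal ht.le]
  have hq_add : ∀ g h : C(X, ℝ), q (g + h) ≤ q g + q h := by
    intro g h
    have hcoe : ⇑(g + h) = fun z => g z + h z := rfl
    simp only [hq, hcoe]
    calc (W⁻¹ * PF f ψ Z N α ε fun z => g z + h z).toReal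
        ≤ (W⁻¹ * (PF f ψ Z N α ε ⇑g + PF f ψ Z N α ε ⇑h)).toReal := by
          apply ENNReal.toReal_mono
          · rw [mul_add]; exact ENNReal.add_ne_top.2 ⟨hqfin g, hqfin h⟩
          · exact mul_le_mul_right (PF_add_le f ψ Z N α ε ⇑g ⇑h) _
      _ = _ := by rw [mul_add, ENNReal.toReal_add (hqfin g) (hqfin h)]
  have hq_zero : ∀ g : C(X, ℝ), (∀ z ∈ Z, g z ≤ 0) → q g = 0 := by
    intro g hg
    simp only [hq, PF_of_nonpos f ψ Z N α ε hg, mul_zero, ENNReal.toReal_zero]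
  -- Hahn–Banach extension of `t • 1 ↦ t`
  have hH : ∀ r : ℝ, r • (1 : C(X, ℝ)) = 0 → r • (1 : ℝ) = 0 := by
    intro r hr
    have h := ContinuousMap.congr_fun hr hZne.some
    simp at h
    simp [h]
  obtain ⟨L, hLF, hLq⟩ := exists_extension_of_le_sublinear
    (LinearPMap.mkSpanSingleton' (σ := RingHom.id ℝ) (1 : C(X, ℝ)) (1 : ℝ) hH) q
    (fun t ht g => hq_smul t ht g) hq_add (by
      intro x
      have hx2 : (x : C(X, ℝ)) ∈ (ℝ ∙ (1 : C(X, ℝ))) := x.2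
      obtain ⟨t, ht⟩ := Submodule.mem_span_singleton.1 hx2
      have hxeq : x = ⟨t • (1 : C(X, ℝ)), by rw [ht]; exact x.2⟩ := Subtype.ext ht.symm
      rw [hxeq, LinearPMap.mkSpanSingleton'_apply]
      rcases le_or_gt t 0 with h | h
      · refine le_trans ?_ (hq_nonneg _)
        simpa using h
      · have : (↑(⟨t • (1 : C(X, ℝ)), by rw [ht]; exact x.2⟩ :
            (LinearPMap.mkSpanSingleton' (σ := RingHom.id ℝ) (1 : C(X, ℝ)) (1 : ℝ) hH).domain) : C(X, ℝ))
            = t • (1 : C(X, ℝ)) := rfl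
        rw [this, hq_smul t h 1, hq_one]
        simp)
  have hmem1 : (1 : C(X, ℝ)) ∈ (LinearPMap.mkSpanSingleton' (σ := RingHom.id ℝ) (1 : C(X, ℝ)) (1 : ℝ) hH).domain :=
    Submodule.mem_span_singleton_self _
  have hL1 : L 1 = 1 := by
    have h := hLF ⟨1, hmem1⟩
    rw [LinearPMap.mkSpanSingleton'_apply_self] at h
    exact h
  have hLnonpos : ∀ g : C(X, ℝ), (∀ z ∈ Z, g z ≤ 0) → L g ≤ 0 :=
    fun g hg => (hLq g).trans (hq_zero g hg).le
  have hLnn : ∀ g : C(X, ℝ), (∀ x, 0 ≤ g x) → 0 ≤ L g := by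
    intro g hg
    have h := hLnonpos (-g) fun z _ => by simpa using hg z
    rw [map_neg] at h; linarith
  have hL_ge_one : ∀ g : C(X, ℝ), (∀ x, 1 ≤ g x) → 1 ≤ L g := by
    intro g hg
    have h := hLnn (g - 1) fun x => by
      simpa [sub_nonneg] using hg x
    rw [map_sub, hL1] at h; linarith
  -- the content built from `L`
  set lamS : Set X → Set ℝ := fun K =>
    {r | ∃ g : C(X, ℝ), (∀ x, 0 ≤ g x) ∧ (∀ x ∈ K, 1 ≤ g x) ∧ r = L g} with hlamS
  have hne : ∀ K : Set X, (lamS K).Nonempty :=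
    fun K => ⟨L 1, 1, fun x => zero_le_one, fun x _ => by simp, rfl⟩
  have hbdd : ∀ K : Set X, BddBelow (lamS K) := by
    intro K
    refine ⟨0, ?_⟩
    rintro r ⟨g, hg0, _, rfl⟩
    exact hLnn g hg0
  have hmono : ∀ K1 K2 : Set X, K1 ⊆ K2 → sInf (lamS K1) ≤ sInf (lamS K2) := by
    intro K1 K2 hsub
    refine csInf_le_csInf (hbdd K1) (hne K2) ?_
    rintro r ⟨g, hg0, hg1, rfl⟩
    exact ⟨g, hg0, fun x hx => hg1 x (hsub hx), rfl⟩
  have hinf_nonneg : ∀ K : Set X, 0 ≤ sInf (lamS K) := by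
    intro K
    refine le_csInf (hne K) ?_
    rintro r ⟨g, hg0, _, rfl⟩
    exact hLnn g hg0
  have hinf_le_one : ∀ K : Set X, sInf (lamS K) ≤ 1 := by
    intro K
    have hmem : L 1 ∈ lamS K := ⟨1, fun x => zero_le_one, fun x _ => by simp, rfl⟩
    have := csInf_le (hbdd K) hmem
    rwa [hL1] at this
  have hsubadd : ∀ K1 K2 : Set X,
      sInf (lamS (K1 ∪ K2)) ≤ sInf (lamS K1) + sInf (lamS K2) := by
    intro K1 K2
    have key : ∀ r1 ∈ lamS K1, ∀ r2 ∈ lamS K2, sInf (lamS (K1 ∪ K2)) ≤ r1 + r2 := by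
      rintro r1 ⟨g1, hg10, hg11, rfl⟩ r2 ⟨g2, hg20, hg21, rfl⟩
      refine csInf_le (hbdd _) ⟨g1 + g2, fun x => add_nonneg (hg10 x) (hg20 x), ?_,
        (map_add L g1 g2).symm⟩
      rintro x (hx | hx)
      · have h1 := hg11 x hx; have h2 := hg20 x
        simp only [ContinuousMap.add_apply]; linarith
      · have h1 := hg21 x hx; have h2 := hg10 x
        simp only [ContinuousMap.add_apply]; linarith
    have step1 : ∀ r1 ∈ lamS K1, sInf (lamS (K1 ∪ K2)) - r1 ≤ sInf (lamS K2) :=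
      fun r1 h1 => le_csInf (hne K2) fun r2 h2 => by linarith [key r1 h1 r2 h2]
    have step2 : sInf (lamS (K1 ∪ K2)) - sInf (lamS K2) ≤ sInf (lamS K1) :=
      le_csInf (hne K1) fun r1 h1 => by linarith [step1 r1 h1]
    linarith
  have hdisj : ∀ K1 K2 : Set X, IsCompact K1 → IsCompact K2 → Disjoint K1 K2 →
      sInf (lamS K1) + sInf (lamS K2) ≤ sInf (lamS (K1 ∪ K2)) := by
    intro K1 K2 hc1 hc2 hd
    obtain ⟨h, hh0, hh1, hhI⟩ := exists_continuous_zero_one_of_isClosed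
      hc2.isClosed hc1.isClosed hd.symm
    refine le_csInf (hne _) ?_
    rintro r ⟨g, hg0, hg1, rfl⟩
    have m1 : L (g * h) ∈ lamS K1 := by
      refine ⟨g * h, fun x => mul_nonneg (hg0 x) (hhI x).1, ?_, rfl⟩
      intro x hx
      have h1 : h x = 1 := by simpa using hh1 hx
      have h2 : (1 : ℝ) ≤ g x := hg1 x (Set.mem_union_left _ hx)
      simp only [ContinuousMap.mul_apply, h1, mul_one]
      exact h2
    have m2 : L (g - g * h) ∈ lamS K2 := by
      refine ⟨g - g * h, ?_, ?_, rfl⟩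
      · intro x
        have h1 := (hhI x).1; have h2 := (hhI x).2; have h3 := hg0 x
        simp only [ContinuousMap.sub_apply, ContinuousMap.mul_apply]
        nlinarith
      · intro x hx
        have h0 : h x = 0 := by simpa using hh0 hx
        have h2 : (1 : ℝ) ≤ g x := hg1 x (Set.mem_union_right _ hx)
        simp only [ContinuousMap.sub_apply, ContinuousMap.mul_apply, h0, mul_zero,
          sub_zero]
        exact h2
    have e : L (g * h) + L (g - g * h) = L g := by
      rw [map_sub]; ring
    calc sInf (lamS K1) + sInf (lamS K2) ≤ L (g * h) + L (g - g * h) :=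
          add_le_add (csInf_le (hbdd _) m1) (csInf_le (hbdd _) m2)
      _ = L g := e
  set con : MeasureTheory.Content X :=
    { toFun := fun K => Real.toNNReal (sInf (lamS ↑K))
      mono' := fun K1 K2 h => Real.toNNReal_mono (hmono _ _ h)
      sup_disjoint' := by
        intro K1 K2 hd _ _
        show Real.toNNReal (sInf (lamS ↑(K1 ⊔ K2)))
          = Real.toNNReal (sInf (lamS ↑K1)) + Real.toNNReal (sInf (lamS ↑K2))
        have he : sInf (lamS ↑(K1 ⊔ K2)) = sInf (lamS ↑K1) + sInf (lamS ↑K2) := by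
          have hcoe : (↑(K1 ⊔ K2) : Set X) = (↑K1 ∪ ↑K2 : Set X) := rfl
          rw [hcoe]
          exact le_antisymm (hsubadd _ _) (hdisj _ _ K1.2 K2.2 hd)
        rw [he, Real.toNNReal_add (hinf_nonneg _) (hinf_nonneg _)]
      sup_le' := by
        intro K1 K2
        show Real.toNNReal (sInf (lamS ↑(K1 ⊔ K2)))
          ≤ Real.toNNReal (sInf (lamS ↑K1)) + Real.toNNReal (sInf (lamS ↑K2))
        have hcoe : (↑(K1 ⊔ K2) : Set X) = (↑K1 ∪ ↑K2 : Set X) := rfl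
        rw [← Real.toNNReal_add (hinf_nonneg _) (hinf_nonneg _)]
        exact Real.toNNReal_mono (hcoe ▸ hsubadd (↑K1) (↑K2)) } with hcon
  have hconK : ∀ K : TopologicalSpace.Compacts X,
      (con K : ℝ≥0∞) = ENNReal.ofReal (sInf (lamS ↑K)) := by
    intro K
    rw [hcon]
    rfl
  have hcon_le : ∀ (K : TopologicalSpace.Compacts X) (g : C(X, ℝ)),
      (∀ x, 0 ≤ g x) → (∀ x ∈ (K : Set X), 1 ≤ g x) →
      (con K : ℝ≥0∞) ≤ ENNReal.ofReal (L g) := by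
    intro K g hg0 hg1
    rw [hconK]
    exact ENNReal.ofReal_le_ofReal (csInf_le (hbdd _) ⟨g, hg0, hg1, rfl⟩)
  -- the measure
  have hμuniv : con.measure Set.univ = 1 := by
    rw [con.measure_apply MeasurableSet.univ, con.outerMeasure_of_isOpen _ isOpen_univ]
    refine le_antisymm ?_ ?_
    · refine iSup₂_le fun K _ => ?_
      rw [hconK]
      calc ENNReal.ofReal (sInf (lamS ↑K)) ≤ ENNReal.ofReal 1 :=
            ENNReal.ofReal_le_ofReal (hinf_le_one _)
        _ = 1 := ENNReal.ofReal_one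
    · have hK : (con ⟨Set.univ, isCompact_univ⟩ : ℝ≥0∞) = 1 := by
        rw [hconK]
        have h1 : sInf (lamS (Set.univ : Set X)) = 1 := by
          refine le_antisymm (hinf_le_one _) ?_
          refine le_csInf (hne _) ?_
          rintro r ⟨g, hg0, hg1, rfl⟩
          exact hL_ge_one g fun x => hg1 x (Set.mem_univ x)
        rw [show ((⟨Set.univ, isCompact_univ⟩ : TopologicalSpace.Compacts X) : Set X)
          = Set.univ from rfl, h1, ENNReal.ofReal_one]
      calc (1 : ℝ≥0∞) = con ⟨Set.univ, isCompact_univ⟩ := hK.symm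
        _ ≤ _ := con.le_innerContent ⟨Set.univ, isCompact_univ⟩ ⟨Set.univ, isOpen_univ⟩
            (subset_refl _)
  have hμZc : con.measure Zᶜ = 0 := by
    rw [con.measure_apply hZ.isClosed.measurableSet.compl,
      con.outerMeasure_of_isOpen _ hZ.isClosed.isOpen_compl]
    refine le_antisymm ?_ zero_le
    refine iSup₂_le fun K hK => ?_
    obtain ⟨g, hg0, hg1, hgI⟩ := exists_continuous_zero_one_of_isClosed hZ.isClosed
      K.2.isClosed (Set.disjoint_left.2 fun x hxZ hxK => hK hxK hxZ)
    have hLg : L g ≤ 0 := hLnonpos g fun z hz => by simp [hg0 hz]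
    have hle := hcon_le K g (fun x => (hgI x).1) (fun x hx => by
      have := hg1 hx; simpa using this.ge)
    calc (con K : ℝ≥0∞) ≤ ENNReal.ofReal (L g) := hle
      _ = 0 := ENNReal.ofReal_of_nonpos hLg
      _ ≤ 0 := le_rfl
  have hμZ : con.measure Z = 1 := by
    have h := measure_add_measure_compl (μ := con.measure) hZ.isClosed.measurableSet
    rw [hμZc, add_zero, hμuniv] at h
    exact h
  refine ⟨con.measure, ⟨hμuniv⟩, hμZ, ?_⟩
  intro x n hn
  have hopen := isOpen_bowenBall f hf n x ε
  rw [con.measure_apply hopen.measurableSet, con.outerMeasure_of_isOpen _ hopen]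
  refine iSup₂_le fun K hK => ?_
  obtain ⟨g, hg0, hg1, hgI⟩ := exists_continuous_zero_one_of_isClosed
    (isClosed_compl_iff.2 hopen) K.2.isClosed
    (Set.disjoint_left.2 fun y hyc hyK => hyc (hK hyK))
  have hfeas : PF f ψ Z N α ε ⇑g ≤
      ENNReal.ofReal (Real.exp (-α * (n : ℝ) + birkSupBall f ψ n x ε)) := by
    refine PF_single f ψ Z N α ε x hn (fun z => (hgI z).2) ?_
    intro z hz hzb
    have := hg0 (Set.mem_compl hzb)
    simp [this]
  have h1 : (con K : ℝ≥0∞) ≤ ENNReal.ofReal (L g) :=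
    hcon_le K g (fun z => (hgI z).1) (fun z hz => by
      have := hg1 hz; simpa using this.ge)
  have h3 : q g ≤ (W⁻¹ *
      ENNReal.ofReal (Real.exp (-α * (n : ℝ) + birkSupBall f ψ n x ε))).toReal := by
    simp only [hq]
    apply ENNReal.toReal_mono
      (ENNReal.mul_ne_top (ENNReal.inv_ne_top.2 hW0) ENNReal.ofReal_ne_top)
    exact mul_le_mul_right hfeas _
  calc (con K : ℝ≥0∞) ≤ ENNReal.ofReal (L g) := h1
    _ ≤ ENNReal.ofReal ((W⁻¹ *
        ENNReal.ofReal (Real.exp (-α * (n : ℝ) + birkSupBall f ψ n x ε))).toReal) :=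
        ENNReal.ofReal_le_ofReal ((hLq g).trans h3)
    _ ≤ _ := ENNReal.ofReal_toReal_le

end
end
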